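/- arXiv:1704.02894 — 15 statements merged into one kernel-verified Lean document; each statement's English description precedes it below -/
import Mathlib

section
/- For every fixed λ ∈ ℝ, the function π ↦ V(π,λ) is nonincreasing and convex on [0,1]; moreover π ↦ V0(π,λ) is nonincreasing and convex on [0,1], and π ↦ V1(π,λ) is affine (linear) in π with slope ρ0 − ρ1. -/
open Set Filter

/-- Bellman iterates. -/
noncomputable def Vit (p ρ0 ρ1 β lam : ℝ) : ℕ → ℝ → ℝ
  | 0, _ => 0
  | n+1, π => max (lam + β * Vit p ρ0 ρ1 β lam n ((1 - p) * π))
      (π * ρ0 + (1 - π) * ρ1 + β * Vit p ρ0 ρ1 β lam n 1)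

lemma mem_scale {p π : ℝ} (hp0 : 0 < p) (hp1 : p < 1) (hπ : π ∈ Set.Icc (0:ℝ) 1) :
    (1 - p) * π ∈ Set.Icc (0:ℝ) 1 := by
  constructor
  · exact mul_nonneg (by linarith) hπ.1
  · nlinarith [hπ.1, hπ.2]

/-- If h is antitone and convex on Icc, so is π ↦ lam + β * h ((1-p)π). -/
lemma comp_scale {p β lam : ℝ} {h : ℝ → ℝ} (hp0 : 0 < p) (hp1 : p < 1) (hb0 : 0 < β)
    (hanti : AntitoneOn h (Set.Icc (0:ℝ) 1)) (hconv : ConvexOn ℝ (Set.Icc (0:ℝ) 1) h) :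
    AntitoneOn (fun π => lam + β * h ((1 - p) * π)) (Set.Icc (0:ℝ) 1) ∧
    ConvexOn ℝ (Set.Icc (0:ℝ) 1) (fun π => lam + β * h ((1 - p) * π)) := by
  constructor
  · intro x hx y hy hxy
    have h1 := hanti (mem_scale hp0 hp1 hx) (mem_scale hp0 hp1 hy)
      (by nlinarith)
    dsimp only
    nlinarith
  · refine ⟨convex_Icc 0 1, ?_⟩
    intro x hx y hy a b ha hb hab
    have hmem1 := mem_scale hp0 hp1 hx
    have hmem2 := mem_scale hp0 hp1 hy
    have key := hconv.2 hmem1 hmem2 ha hb hab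
    simp only [smul_eq_mul] at key ⊢
    have heq : (1 - p) * (a * x + b * y) = a * ((1 - p) * x) + b * ((1 - p) * y) := by ring
    rw [heq]
    have hb' : b = 1 - a := by linarith
    subst hb'
    nlinarith [mul_le_mul_of_nonneg_left key hb0.le]
  
lemma affine_anti_convex {ρ0 ρ1 c : ℝ} (hr01 : ρ0 < ρ1) :
    AntitoneOn (fun π => π * ρ0 + (1 - π) * ρ1 + c) (Set.Icc (0:ℝ) 1) ∧
    ConvexOn ℝ (Set.Icc (0:ℝ) 1) (fun π => π * ρ0 + (1 - π) * ρ1 + c) := by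
  constructor
  · intro x _ y _ hxy
    dsimp only
    nlinarith
  · refine ⟨convex_Icc 0 1, ?_⟩
    intro x _ y _ a b ha hb hab
    simp only [smul_eq_mul]
    have hb' : b = 1 - a := by linarith
    subst hb'
    have : (a * x + (1 - a) * y) * ρ0 + (1 - (a * x + (1 - a) * y)) * ρ1 + c =
        a * (x * ρ0 + (1 - x) * ρ1 + c) + (1 - a) * (y * ρ0 + (1 - y) * ρ1 + c) := by ring
    linarith [this.le]

lemma max_anti {f g : ℝ → ℝ} {s : Set ℝ} (hf : AntitoneOn f s) (hg : AntitoneOn g s) :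
    AntitoneOn (fun x => max (f x) (g x)) s := fun x hx y hy hxy =>
  max_le_max (hf hx hy hxy) (hg hx hy hxy)

lemma Vit_anti_convex (p ρ0 ρ1 β lam : ℝ)
    (hp0 : 0 < p) (hp1 : p < 1) (hr01 : ρ0 < ρ1) (hb0 : 0 < β) :
    ∀ n, AntitoneOn (Vit p ρ0 ρ1 β lam n) (Set.Icc (0:ℝ) 1) ∧
      ConvexOn ℝ (Set.Icc (0:ℝ) 1) (Vit p ρ0 ρ1 β lam n) := by
  intro n
  induction n with
  | zero =>
      constructor
      · intro x _ y _ _; simp [Vit]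
      · exact ⟨convex_Icc 0 1, by intro x _ y _ a b ha hb hab; simp [Vit]⟩
  | succ n ih =>
      obtain ⟨ha1, hc1⟩ := comp_scale hp0 hp1 hb0 ih.1 ih.2
      obtain ⟨ha2, hc2⟩ := affine_anti_convex (ρ0 := ρ0) (ρ1 := ρ1)
        (c := β * Vit p ρ0 ρ1 β lam n 1) hr01
      constructor
      · exact max_anti ha1 ha2
      · have := hc1.sup hc2
        convert this using 1
        all_goals rfl
  
theorem stmt_1 (p ρ0 ρ1 β : ℝ)
    (hp0 : 0 < p) (hp1 : p < 1) (hr0 : 0 < ρ0) (hr01 : ρ0 < ρ1) (hr1 : ρ1 < 1)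
    (hb0 : 0 < β) (hb1 : β < 1)
    (V : ℝ → ℝ → ℝ)
    (hVbd : ∀ lam : ℝ, ∃ C : ℝ, ∀ π ∈ Set.Icc (0:ℝ) 1, |V π lam| ≤ C)
    (hVeq : ∀ lam : ℝ, ∀ π ∈ Set.Icc (0:ℝ) 1,
      V π lam = max (lam + β * V ((1 - p) * π) lam)
        (π * ρ0 + (1 - π) * ρ1 + β * V 1 lam)) :
    ∀ lam : ℝ,
      AntitoneOn (fun π => V π lam) (Set.Icc (0:ℝ) 1) ∧
      ConvexOn ℝ (Set.Icc (0:ℝ) 1) (fun π => V π lam) ∧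
      AntitoneOn (fun π => lam + β * V ((1 - p) * π) lam) (Set.Icc (0:ℝ) 1) ∧
      ConvexOn ℝ (Set.Icc (0:ℝ) 1) (fun π => lam + β * V ((1 - p) * π) lam) ∧
      (∃ c : ℝ, ∀ π ∈ Set.Icc (0:ℝ) 1,
        π * ρ0 + (1 - π) * ρ1 + β * V 1 lam = (ρ0 - ρ1) * π + c) := by
  intro lam
  obtain ⟨C, hC⟩ := hVbd lam
  have hone : (1:ℝ) ∈ Set.Icc (0:ℝ) 1 := ⟨zero_le_one, le_refl 1⟩
  -- error bound
  have herr : ∀ n, ∀ π ∈ Set.Icc (0:ℝ) 1,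
      |V π lam - Vit p ρ0 ρ1 β lam n π| ≤ β ^ n * C := by
    intro n
    induction n with
    | zero =>
        intro π hπ
        simpa [Vit] using hC π hπ
    | succ n ih =>
        intro π hπ
        rw [hVeq lam π hπ]
        have h1 := ih _ (mem_scale hp0 hp1 hπ)
        have h2 := ih 1 hone
        have hmax : |max (lam + β * V ((1 - p) * π) lam)
              (π * ρ0 + (1 - π) * ρ1 + β * V 1 lam)
            - max (lam + β * Vit p ρ0 ρ1 β lam n ((1 - p) * π))
              (π * ρ0 + (1 - π) * ρ1 + β * Vit p ρ0 ρ1 β lam n 1)| ≤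
            max |(lam + β * V ((1 - p) * π) lam) -
                (lam + β * Vit p ρ0 ρ1 β lam n ((1 - p) * π))|
              |(π * ρ0 + (1 - π) * ρ1 + β * V 1 lam) -
                (π * ρ0 + (1 - π) * ρ1 + β * Vit p ρ0 ρ1 β lam n 1)| :=
          abs_max_sub_max_le_max _ _ _ _
    
        have e1 : (lam + β * V ((1 - p) * π) lam) -
            (lam + β * Vit p ρ0 ρ1 β lam n ((1 - p) * π)) =
            β * (V ((1 - p) * π) lam - Vit p ρ0 ρ1 β lam n ((1 - p) * π)) := by ring
        have e2 : (π * ρ0 + (1 - π) * ρ1 + β * V 1 lam) -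
            (π * ρ0 + (1 - π) * ρ1 + β * Vit p ρ0 ρ1 β lam n 1) =
            β * (V 1 lam - Vit p ρ0 ρ1 β lam n 1) := by ring
        rw [e1, e2, abs_mul, abs_mul, abs_of_pos hb0] at hmax
        have hb1' : β * |V ((1 - p) * π) lam - Vit p ρ0 ρ1 β lam n ((1 - p) * π)| ≤
            β * (β ^ n * C) := by
          exact mul_le_mul_of_nonneg_left h1 hb0.le
        have hb2' : β * |V 1 lam - Vit p ρ0 ρ1 β lam n 1| ≤ β * (β ^ n * C) :=
          mul_le_mul_of_nonneg_left h2 hb0.le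
        simp only [Vit]
        refine hmax.trans ?_
        have hpow : β * (β ^ n * C) = β ^ (n + 1) * C := by ring
        rw [← hpow]
        exact max_le hb1' hb2'
  have hCnn : 0 ≤ C := (abs_nonneg _).trans (hC 0 ⟨le_refl 0, zero_le_one⟩)
  -- convergence
  have hlim : ∀ π ∈ Set.Icc (0:ℝ) 1,
      Tendsto (fun n => Vit p ρ0 ρ1 β lam n π) atTop (nhds (V π lam)) := by
    intro π hπ
    rw [tendsto_iff_dist_tendsto_zero]
    have h0 : Tendsto (fun n : ℕ => β ^ n * C) atTop (nhds 0) := by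
      simpa using (tendsto_pow_atTop_nhds_zero_of_lt_one hb0.le hb1).mul_const C
    apply squeeze_zero (fun n => dist_nonneg) _ h0
    intro n
    rw [Real.dist_eq, abs_sub_comm]
    exact herr n π hπ
  have hAC := fun n => Vit_anti_convex p ρ0 ρ1 β lam hp0 hp1 hr01 hb0 n
  -- V antitone
  have hVanti : AntitoneOn (fun π => V π lam) (Set.Icc (0:ℝ) 1) := by
    intro x hx y hy hxy
    exact le_of_tendsto_of_tendsto' (hlim y hy) (hlim x hx)
      (fun n => (hAC n).1 hx hy hxy)
  -- V convex
  have hVconv : ConvexOn ℝ (Set.Icc (0:ℝ) 1) (fun π => V π lam) := by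
    refine ⟨convex_Icc 0 1, ?_⟩
    intro x hx y hy a b ha hb hab
    have hmem : a • x + b • y ∈ Set.Icc (0:ℝ) 1 := (convex_Icc 0 1) hx hy ha hb hab
    refine le_of_tendsto_of_tendsto' (hlim _ hmem) ?_
      (fun n => (hAC n).2.2 hx hy ha hb hab)
    exact ((hlim x hx).const_mul a).add ((hlim y hy).const_mul b)
  obtain ⟨h3, h4⟩ := comp_scale (h := fun π => V π lam) hp0 hp1 hb0 hVanti hVconv
  exact ⟨hVanti, hVconv, h3, h4, ⟨ρ1 + β * V 1 lam, fun π _ => by ring⟩⟩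
end

section
/- For every fixed λ ∈ ℝ, the function π ↦ V(π,λ) is nonincreasing and convex on [0,1]; moreover π ↦ V0(π,λ) is nonincreasing and convex on [0,1], and π ↦ V1(π,λ) is affine (linear) in π with slope ρ0 − ρ1. -/
/-- Value iteration for the type-B problem. -/
noncomputable def iterV (p lam β ρ0 ρ1 : ℝ) : ℕ → ℝ → ℝ
  | 0 => fun _ => 0
  | n + 1 => fun π =>
      max (lam + β * iterV p lam β ρ0 ρ1 n (π + p * (1 - π)))
        (π * ρ0 + (1 - π) * ρ1 + β * iterV p lam β ρ0 ρ1 n 0)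

lemma sigma_mem {p : ℝ} (hp0 : 0 < p) (hp1 : p < 1) {π : ℝ}
    (hπ : π ∈ Set.Icc (0:ℝ) 1) : π + p * (1 - π) ∈ Set.Icc (0:ℝ) 1 := by
  obtain ⟨h0, h1⟩ := hπ
  constructor <;> nlinarith

lemma iterV_antitone (p lam β ρ0 ρ1 : ℝ)
    (hp0 : 0 < p) (hp1 : p < 1) (hr01 : ρ0 < ρ1) (hb0 : 0 < β) (n : ℕ) :
    AntitoneOn (iterV p lam β ρ0 ρ1 n) (Set.Icc (0:ℝ) 1) := by
  induction n with
  | zero => intro a _ b _ _; simp [iterV]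
  | succ n ih =>
    intro a ha b hb hab
    simp only [iterV]
    apply max_le_max
    · have h1 : a + p * (1 - a) ≤ b + p * (1 - b) := by nlinarith
      have := ih (sigma_mem hp0 hp1 ha) (sigma_mem hp0 hp1 hb) h1
      nlinarith
    · nlinarith [ha.1, hb.2]

lemma iterV_convex (p lam β ρ0 ρ1 : ℝ)
    (hp0 : 0 < p) (hp1 : p < 1) (hb0 : 0 < β) (n : ℕ) :
    ConvexOn ℝ (Set.Icc (0:ℝ) 1) (iterV p lam β ρ0 ρ1 n) := by
  induction n with
  | zero =>
    refine ⟨convex_Icc 0 1, ?_⟩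
    intro x _ y _ a b _ _ _
    simp [iterV]
  | succ n ih =>
    have h1 : ConvexOn ℝ (Set.Icc (0:ℝ) 1)
        (fun π => lam + β * iterV p lam β ρ0 ρ1 n (π + p * (1 - π))) := by
      refine ⟨convex_Icc 0 1, ?_⟩
      intro x hx y hy a b ha hb hab
      simp only [smul_eq_mul]
      have hkey : (a * x + b * y) + p * (1 - (a * x + b * y))
          = a * (x + p * (1 - x)) + b * (y + p * (1 - y)) := by nlinarith
      rw [hkey]
      have := ih.2 (sigma_mem hp0 hp1 hx) (sigma_mem hp0 hp1 hy) ha hb hab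
      simp only [smul_eq_mul] at this
      have h := mul_le_mul_of_nonneg_left this hb0.le
      have hl : a * lam + b * lam = lam := by linear_combination lam * hab
      nlinarith [h, hl]
    have h2 : ConvexOn ℝ (Set.Icc (0:ℝ) 1)
        (fun π => π * ρ0 + (1 - π) * ρ1 + β * iterV p lam β ρ0 ρ1 n 0) := by
      refine ⟨convex_Icc 0 1, ?_⟩
      intro x _ y _ a b _ _ hab
      simp only [smul_eq_mul]
      refine le_of_eq ?_
      linear_combination (-(ρ1 + β * iterV p lam β ρ0 ρ1 n 0)) * hab
    have := h1.sup h2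
    refine ⟨convex_Icc 0 1, ?_⟩
    intro x hx y hy a b ha hb hab
    have h := this.2 hx hy ha hb hab
    simpa [iterV, Pi.sup_def] using h

theorem stmt_2 (p ρ0 ρ1 β : ℝ)
    (hp0 : 0 < p) (hp1 : p < 1) (hr0 : 0 < ρ0) (hr01 : ρ0 < ρ1) (hr1 : ρ1 < 1)
    (hb0 : 0 < β) (hb1 : β < 1)
    (V : ℝ → ℝ → ℝ)
    (hVbd : ∀ lam : ℝ, ∃ C : ℝ, ∀ π ∈ Set.Icc (0:ℝ) 1, |V π lam| ≤ C)
    (hVeq : ∀ lam : ℝ, ∀ π ∈ Set.Icc (0:ℝ) 1,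
      V π lam = max (lam + β * V (π + p * (1 - π)) lam)
        (π * ρ0 + (1 - π) * ρ1 + β * V 0 lam)) :
    ∀ lam : ℝ,
      AntitoneOn (fun π => V π lam) (Set.Icc (0:ℝ) 1) ∧
      ConvexOn ℝ (Set.Icc (0:ℝ) 1) (fun π => V π lam) ∧
      AntitoneOn (fun π => lam + β * V (π + p * (1 - π)) lam) (Set.Icc (0:ℝ) 1) ∧
      ConvexOn ℝ (Set.Icc (0:ℝ) 1) (fun π => lam + β * V (π + p * (1 - π)) lam) ∧
      (∃ c : ℝ, ∀ π ∈ Set.Icc (0:ℝ) 1,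
        π * ρ0 + (1 - π) * ρ1 + β * V 0 lam = (ρ0 - ρ1) * π + c) := by
  intro lam
  obtain ⟨C0, hC0⟩ := hVbd lam
  set C := max C0 0 with hCdef
  have hC : ∀ π ∈ Set.Icc (0:ℝ) 1, |V π lam| ≤ C := fun π hπ =>
    (hC0 π hπ).trans (le_max_left _ _)
  have hCnn : (0:ℝ) ≤ C := le_max_right _ _
  set W : ℝ → ℝ := fun π => V π lam with hWdef
  have hWeq : ∀ π ∈ Set.Icc (0:ℝ) 1,
      W π = max (lam + β * W (π + p * (1 - π))) (π * ρ0 + (1 - π) * ρ1 + β * W 0) :=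
    hVeq lam
  have h0mem : (0:ℝ) ∈ Set.Icc (0:ℝ) 1 := by constructor <;> norm_num
  -- error bound
  have herr : ∀ n : ℕ, ∀ π ∈ Set.Icc (0:ℝ) 1,
      |iterV p lam β ρ0 ρ1 n π - W π| ≤ β ^ n * C := by
    intro n
    induction n with
    | zero =>
      intro π hπ
      simpa [iterV, abs_sub_comm] using hC π hπ
    | succ n ih =>
      intro π hπ
      rw [hWeq π hπ]
      simp only [iterV]
      refine (abs_max_sub_max_le_max _ _ _ _).trans ?_
      have e1 : (lam + β * iterV p lam β ρ0 ρ1 n (π + p * (1 - π))) -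
          (lam + β * W (π + p * (1 - π)))
          = β * (iterV p lam β ρ0 ρ1 n (π + p * (1 - π)) - W (π + p * (1 - π))) := by ring
      have e2 : (π * ρ0 + (1 - π) * ρ1 + β * iterV p lam β ρ0 ρ1 n 0) -
          (π * ρ0 + (1 - π) * ρ1 + β * W 0)
          = β * (iterV p lam β ρ0 ρ1 n 0 - W 0) := by ring
      rw [e1, e2, abs_mul, abs_mul, abs_of_pos hb0]
      have b1 := ih _ (sigma_mem hp0 hp1 hπ)
      have b2 := ih _ h0mem
      have : β ^ (n+1) * C = β * (β ^ n * C) := by ring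
      rw [this]
      apply max_le <;> nlinarith
  -- pointwise convergence
  have htend : ∀ π ∈ Set.Icc (0:ℝ) 1,
      Filter.Tendsto (fun n => iterV p lam β ρ0 ρ1 n π) Filter.atTop (nhds (W π)) := by
    intro π hπ
    have hβ : Filter.Tendsto (fun n : ℕ => β ^ n * C) Filter.atTop (nhds 0) := by
      have := tendsto_pow_atTop_nhds_zero_of_lt_one hb0.le hb1
      simpa using this.mul_const C
    have h0 : Filter.Tendsto (fun n => iterV p lam β ρ0 ρ1 n π - W π)
        Filter.atTop (nhds 0) :=
      squeeze_zero_norm (fun n => by simpa using herr n π hπ) hβ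
    have := h0.add_const (W π)
    simpa using this
  -- antitone
  have hanti : AntitoneOn W (Set.Icc (0:ℝ) 1) := by
    intro a ha b hb hab
    refine le_of_tendsto_of_tendsto' (htend b hb) (htend a ha) ?_
    intro n
    exact iterV_antitone p lam β ρ0 ρ1 hp0 hp1 hr01 hb0 n ha hb hab
  -- convex
  have hconv : ConvexOn ℝ (Set.Icc (0:ℝ) 1) W := by
    refine ⟨convex_Icc 0 1, ?_⟩
    intro x hx y hy a b ha hb hab
    have hmem : a • x + b • y ∈ Set.Icc (0:ℝ) 1 :=
      (convex_Icc 0 1) hx hy ha hb hab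
    refine le_of_tendsto_of_tendsto' (htend _ hmem)
      (((htend x hx).const_mul a).add ((htend y hy).const_mul b)) ?_
    intro n
    have := (iterV_convex p lam β ρ0 ρ1 hp0 hp1 hb0 n).2 hx hy ha hb hab
    simpa using this
  refine ⟨hanti, hconv, ?_, ?_, ?_⟩
  · -- V0 antitone
    intro a ha b hb hab
    have h1 : a + p * (1 - a) ≤ b + p * (1 - b) := by nlinarith
    have := hanti (sigma_mem hp0 hp1 ha) (sigma_mem hp0 hp1 hb) h1
    simp only
    nlinarith
  · -- V0 convex
    refine ⟨convex_Icc 0 1, ?_⟩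
    intro x hx y hy a b ha hb hab
    simp only [smul_eq_mul]
    have hkey : (a * x + b * y) + p * (1 - (a * x + b * y))
        = a * (x + p * (1 - x)) + b * (y + p * (1 - y)) := by nlinarith
    rw [hkey]
    have := hconv.2 (sigma_mem hp0 hp1 hx) (sigma_mem hp0 hp1 hy) ha hb hab
    simp only [smul_eq_mul] at this
    have h := mul_le_mul_of_nonneg_left this hb0.le
    have hl : a * lam + b * lam = lam := by linear_combination lam * hab
    nlinarith [h, hl]
  · -- affine
    exact ⟨ρ1 + β * V 0 lam, fun π _ => by ring⟩
end

section
/- For every fixed π ∈ [0,1], the functions λ ↦ V(π,λ), λ ↦ V0(π,λ) and λ ↦ V1(π,λ) are nondecreasing and convex on ℝ. -/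
private lemma max_sub_max_le (a b c d : ℝ) :
    max a b - max c d ≤ max (a - c) (b - d) := by
  have h1 := le_max_left c d
  have h2 := le_max_right c d
  have h3 := le_max_left (a - c) (b - d)
  have h4 := le_max_right (a - c) (b - d)
  have : max a b ≤ max (a - c) (b - d) + max c d :=
    max_le (by linarith) (by linarith)
  linarith

private lemma Vmono (p ρ0 ρ1 β : ℝ)
    (hp0 : 0 < p) (hp1 : p < 1) (hb0 : 0 < β) (hb1 : β < 1)
    (V : ℝ → ℝ → ℝ)
    (hVbd : ∀ lam : ℝ, ∃ C : ℝ, ∀ π ∈ Set.Icc (0:ℝ) 1, |V π lam| ≤ C)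
    (hVeq : ∀ lam : ℝ, ∀ π ∈ Set.Icc (0:ℝ) 1,
      V π lam = max (lam + β * V ((1 - p) * π) lam)
        (π * ρ0 + (1 - π) * ρ1 + β * V 1 lam)) :
    ∀ l1 l2 : ℝ, l1 ≤ l2 → ∀ π ∈ Set.Icc (0:ℝ) 1, V π l1 ≤ V π l2 := by
  intro l1 l2 hle
  obtain ⟨C1, hC1⟩ := hVbd l1
  obtain ⟨C2, hC2⟩ := hVbd l2
  set S : Set ℝ := (fun π => V π l1 - V π l2) '' Set.Icc 0 1 with hS
  have h0 : (0:ℝ) ∈ Set.Icc (0:ℝ) 1 := by norm_num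
  have h1' : (1:ℝ) ∈ Set.Icc (0:ℝ) 1 := by norm_num
  have hne : S.Nonempty := ⟨_, ⟨0, h0, rfl⟩⟩
  have hbdd : BddAbove S := by
    refine ⟨C1 + C2, ?_⟩
    rintro x ⟨π, hπ, rfl⟩
    have h1 := abs_le.mp (hC1 π hπ)
    have h2 := abs_le.mp (hC2 π hπ)
    simp only
    linarith [h1.2, h2.1]
  set D := sSup S with hD
  have hmem : ∀ π ∈ Set.Icc (0:ℝ) 1, (1 - p) * π ∈ Set.Icc (0:ℝ) 1 := by
    intro π hπ
    obtain ⟨ha, hb⟩ := hπ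
    constructor
    · nlinarith
    · nlinarith
  have hkey : ∀ x ∈ S, x ≤ β * D := by
    rintro x ⟨π, hπ, rfl⟩
    have hw := hmem π hπ
    have e1 := hVeq l1 π hπ
    have e2 := hVeq l2 π hπ
    simp only
    rw [e1, e2]
    have hmax := max_sub_max_le (l1 + β * V ((1 - p) * π) l1)
      (π * ρ0 + (1 - π) * ρ1 + β * V 1 l1)
      (l2 + β * V ((1 - p) * π) l2)
      (π * ρ0 + (1 - π) * ρ1 + β * V 1 l2)
    have hd1 : V ((1 - p) * π) l1 - V ((1 - p) * π) l2 ≤ D :=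
      le_csSup hbdd ⟨_, hw, rfl⟩
    have hd2 : V 1 l1 - V 1 l2 ≤ D := le_csSup hbdd ⟨1, h1', rfl⟩
    have hm : max (l1 + β * V ((1 - p) * π) l1 - (l2 + β * V ((1 - p) * π) l2))
        (π * ρ0 + (1 - π) * ρ1 + β * V 1 l1 - (π * ρ0 + (1 - π) * ρ1 + β * V 1 l2))
        ≤ β * D :=
      max_le (by linarith [mul_le_mul_of_nonneg_left hd1 hb0.le])
        (by linarith [mul_le_mul_of_nonneg_left hd2 hb0.le])
    linarith
  have hDle : D ≤ β * D := csSup_le hne hkey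
  have hD0 : D ≤ 0 := by nlinarith
  intro π hπ
  have := hkey _ ⟨π, hπ, rfl⟩
  simp only at this
  have : β * D ≤ 0 := mul_nonpos_of_nonneg_of_nonpos hb0.le hD0
  linarith

private lemma Vconv (p ρ0 ρ1 β : ℝ)
    (hp0 : 0 < p) (hp1 : p < 1) (hb0 : 0 < β) (hb1 : β < 1)
    (V : ℝ → ℝ → ℝ)
    (hVbd : ∀ lam : ℝ, ∃ C : ℝ, ∀ π ∈ Set.Icc (0:ℝ) 1, |V π lam| ≤ C)
    (hVeq : ∀ lam : ℝ, ∀ π ∈ Set.Icc (0:ℝ) 1,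
      V π lam = max (lam + β * V ((1 - p) * π) lam)
        (π * ρ0 + (1 - π) * ρ1 + β * V 1 lam)) :
    ∀ a b l1 l2 : ℝ, 0 ≤ a → 0 ≤ b → a + b = 1 → ∀ π ∈ Set.Icc (0:ℝ) 1,
      V π (a * l1 + b * l2) ≤ a * V π l1 + b * V π l2 := by
  intro a b l1 l2 ha hb hab
  set L := a * l1 + b * l2 with hL
  obtain ⟨CL, hCL⟩ := hVbd L
  obtain ⟨C1, hC1⟩ := hVbd l1
  obtain ⟨C2, hC2⟩ := hVbd l2
  set S : Set ℝ := (fun π => V π L - (a * V π l1 + b * V π l2)) '' Set.Icc 0 1 with hS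
  have h0 : (0:ℝ) ∈ Set.Icc (0:ℝ) 1 := by norm_num
  have h1' : (1:ℝ) ∈ Set.Icc (0:ℝ) 1 := by norm_num
  have hne : S.Nonempty := ⟨_, ⟨0, h0, rfl⟩⟩
  have hbdd : BddAbove S := by
    refine ⟨CL + C1 + C2, ?_⟩
    rintro x ⟨π, hπ, rfl⟩
    have hL' := abs_le.mp (hCL π hπ)
    have h1 := abs_le.mp (hC1 π hπ)
    have h2 := abs_le.mp (hC2 π hπ)
    simp only
    have hC1p : 0 ≤ C1 := le_trans (abs_nonneg _) (hC1 π hπ)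
    have hC2p : 0 ≤ C2 := le_trans (abs_nonneg _) (hC2 π hπ)
    have k1 := mul_le_mul_of_nonneg_left h1.1 ha
    have k2 := mul_le_mul_of_nonneg_left h2.1 hb
    have k3 : 0 ≤ (1 - a) * C1 := mul_nonneg (by linarith) hC1p
    have k4 : 0 ≤ (1 - b) * C2 := mul_nonneg (by linarith) hC2p
    linarith [hL'.2]
  set D := sSup S with hD
  have hmem : ∀ π ∈ Set.Icc (0:ℝ) 1, (1 - p) * π ∈ Set.Icc (0:ℝ) 1 := by
    intro π hπ
    obtain ⟨hx, hy⟩ := hπ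
    constructor
    · nlinarith
    · nlinarith
  have hkey : ∀ x ∈ S, x ≤ β * D := by
    rintro x ⟨π, hπ, rfl⟩
    have hw := hmem π hπ
    have eL := hVeq L π hπ
    have e1 := hVeq l1 π hπ
    have e2 := hVeq l2 π hπ
    simp only
    rw [eL, e1, e2]
    set A1 := l1 + β * V ((1 - p) * π) l1 with hA1
    set A2 := l2 + β * V ((1 - p) * π) l2 with hA2
    set AL := L + β * V ((1 - p) * π) L with hAL
    set B1 := π * ρ0 + (1 - π) * ρ1 + β * V 1 l1 with hB1
    set B2 := π * ρ0 + (1 - π) * ρ1 + β * V 1 l2 with hB2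
    set BL := π * ρ0 + (1 - π) * ρ1 + β * V 1 L with hBL
    have hcomb : max (a * A1 + b * A2) (a * B1 + b * B2)
        ≤ a * max A1 B1 + b * max A2 B2 := by
      apply max_le
      · linarith [mul_le_mul_of_nonneg_left (le_max_left A1 B1) ha,
          mul_le_mul_of_nonneg_left (le_max_left A2 B2) hb]
      · linarith [mul_le_mul_of_nonneg_left (le_max_right A1 B1) ha,
          mul_le_mul_of_nonneg_left (le_max_right A2 B2) hb]
    have hmax := max_sub_max_le AL BL (a * A1 + b * A2) (a * B1 + b * B2)
    have hd1 : V ((1 - p) * π) L - (a * V ((1 - p) * π) l1 + b * V ((1 - p) * π) l2) ≤ D :=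
      le_csSup hbdd ⟨_, hw, rfl⟩
    have hd2 : V 1 L - (a * V 1 l1 + b * V 1 l2) ≤ D := le_csSup hbdd ⟨1, h1', rfl⟩
    have hm : max (AL - (a * A1 + b * A2)) (BL - (a * B1 + b * B2)) ≤ β * D := by
      apply max_le
      · rw [hAL, hA1, hA2, hL]
        have k := mul_le_mul_of_nonneg_left hd1 hb0.le
        linarith
      · rw [hBL, hB1, hB2]
        have k := mul_le_mul_of_nonneg_left hd2 hb0.le
        have k2 : a * (π * ρ0 + (1 - π) * ρ1) + b * (π * ρ0 + (1 - π) * ρ1)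
            = π * ρ0 + (1 - π) * ρ1 := by rw [← add_mul, hab, one_mul]
        linarith
    linarith
  have hDle : D ≤ β * D := csSup_le hne hkey
  have hD0 : D ≤ 0 := by nlinarith
  intro π hπ
  have := hkey _ ⟨π, hπ, rfl⟩
  simp only at this
  have : β * D ≤ 0 := mul_nonpos_of_nonneg_of_nonpos hb0.le hD0
  linarith

theorem stmt_3 (p ρ0 ρ1 β : ℝ)
    (hp0 : 0 < p) (hp1 : p < 1) (hr0 : 0 < ρ0) (hr01 : ρ0 < ρ1) (hr1 : ρ1 < 1)
    (hb0 : 0 < β) (hb1 : β < 1)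
    (V : ℝ → ℝ → ℝ)
    (hVbd : ∀ lam : ℝ, ∃ C : ℝ, ∀ π ∈ Set.Icc (0:ℝ) 1, |V π lam| ≤ C)
    (hVeq : ∀ lam : ℝ, ∀ π ∈ Set.Icc (0:ℝ) 1,
      V π lam = max (lam + β * V ((1 - p) * π) lam)
        (π * ρ0 + (1 - π) * ρ1 + β * V 1 lam)) :
    ∀ π ∈ Set.Icc (0:ℝ) 1,
      Monotone (fun lam => V π lam) ∧
      ConvexOn ℝ Set.univ (fun lam => V π lam) ∧
      Monotone (fun lam => lam + β * V ((1 - p) * π) lam) ∧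
      ConvexOn ℝ Set.univ (fun lam => lam + β * V ((1 - p) * π) lam) ∧
      Monotone (fun lam => π * ρ0 + (1 - π) * ρ1 + β * V 1 lam) ∧
      ConvexOn ℝ Set.univ (fun lam => π * ρ0 + (1 - π) * ρ1 + β * V 1 lam) := by
  have hmono := Vmono p ρ0 ρ1 β hp0 hp1 hb0 hb1 V hVbd hVeq
  have hconv := Vconv p ρ0 ρ1 β hp0 hp1 hb0 hb1 V hVbd hVeq
  intro π hπ
  have h1' : (1:ℝ) ∈ Set.Icc (0:ℝ) 1 := by norm_num
  have hw : (1 - p) * π ∈ Set.Icc (0:ℝ) 1 := by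
    obtain ⟨hx, hy⟩ := hπ
    constructor
    · nlinarith
    · nlinarith
  refine ⟨?_, ?_, ?_, ?_, ?_, ?_⟩
  · intro x y hxy
    exact hmono x y hxy π hπ
  · refine ⟨convex_univ, ?_⟩
    intro x _ y _ a b ha hb hab
    simp only [smul_eq_mul]
    exact hconv a b x y ha hb hab π hπ
  · intro x y hxy
    have := hmono x y hxy _ hw
    simp only
    linarith [mul_le_mul_of_nonneg_left this hb0.le]
  · refine ⟨convex_univ, ?_⟩
    intro x _ y _ a b ha hb hab
    simp only [smul_eq_mul]
    have := hconv a b x y ha hb hab _ hw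
    linarith [mul_le_mul_of_nonneg_left this hb0.le]
  · intro x y hxy
    have := hmono x y hxy 1 h1'
    simp only
    linarith [mul_le_mul_of_nonneg_left this hb0.le]
  · refine ⟨convex_univ, ?_⟩
    intro x _ y _ a b ha hb hab
    simp only [smul_eq_mul]
    have := hconv a b x y ha hb hab 1 h1'
    have k : a * (π * ρ0 + (1 - π) * ρ1) + b * (π * ρ0 + (1 - π) * ρ1)
        = π * ρ0 + (1 - π) * ρ1 := by rw [← add_mul, hab, one_mul]
    linarith [mul_le_mul_of_nonneg_left this hb0.le]
end

section
/- Set λ_H := ρ1 and λ_L := ρ0 + β·p·(ρ0 − ρ1). If λ ≥ λ_H then V0(π,λ) ≥ V1(π,λ) for all π ∈ [0,1] (not playing is optimal at every belief), and if λ ≤ λ_L then V1(π,λ) ≥ V0(π,λ) for all π ∈ [0,1] (playing is optimal at every belief). -/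
lemma bellman_uniq (β : ℝ) (hb0 : 0 < β) (hb1 : β < 1) (V W : ℝ → ℝ)
    (hC : ∃ C : ℝ, ∀ π ∈ Set.Icc (0:ℝ) 1, |V π - W π| ≤ C)
    (hstep : ∀ D : ℝ, (∀ σ ∈ Set.Icc (0:ℝ) 1, |V σ - W σ| ≤ D) →
      ∀ π ∈ Set.Icc (0:ℝ) 1, |V π - W π| ≤ β * D) :
    ∀ π ∈ Set.Icc (0:ℝ) 1, V π = W π := by
  obtain ⟨C, hC⟩ := hC
  set S : Set ℝ := (fun π => |V π - W π|) '' Set.Icc (0:ℝ) 1 with hS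
  have hne : S.Nonempty := ⟨|V 0 - W 0|, ⟨0, by simp, rfl⟩⟩
  have hbdd : BddAbove S := ⟨C, by rintro x ⟨π, hπ, rfl⟩; exact hC π hπ⟩
  set D := sSup S with hD
  have hle : ∀ σ ∈ Set.Icc (0:ℝ) 1, |V σ - W σ| ≤ D := by
    intro σ hσ; exact le_csSup hbdd ⟨σ, hσ, rfl⟩
  have h2 := hstep D hle
  have hDle : D ≤ β * D := by
    apply csSup_le hne
    rintro x ⟨π, hπ, rfl⟩; exact h2 π hπ
  have hD0 : D ≤ 0 := by nlinarith
  intro π hπ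
  have := h2 π hπ
  have : |V π - W π| ≤ 0 := le_trans this (by nlinarith)
  have := abs_nonneg (V π - W π)
  have : |V π - W π| = 0 := le_antisymm ‹|V π - W π| ≤ 0› ‹0 ≤ |V π - W π|›
  have := abs_eq_zero.mp this
  linarith [this]

theorem stmt_4 (p ρ0 ρ1 β : ℝ)
    (hp0 : 0 < p) (hp1 : p < 1) (hr0 : 0 < ρ0) (hr01 : ρ0 < ρ1) (hr1 : ρ1 < 1)
    (hb0 : 0 < β) (hb1 : β < 1)
    (V : ℝ → ℝ → ℝ)
    (hVbd : ∀ lam : ℝ, ∃ C : ℝ, ∀ π ∈ Set.Icc (0:ℝ) 1, |V π lam| ≤ C)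
    (hVeq : ∀ lam : ℝ, ∀ π ∈ Set.Icc (0:ℝ) 1,
      V π lam = max (lam + β * V ((1 - p) * π) lam)
        (π * ρ0 + (1 - π) * ρ1 + β * V 1 lam)) :
    (∀ lam : ℝ, ρ1 ≤ lam → ∀ π ∈ Set.Icc (0:ℝ) 1,
      π * ρ0 + (1 - π) * ρ1 + β * V 1 lam ≤ lam + β * V ((1 - p) * π) lam) ∧
    (∀ lam : ℝ, lam ≤ ρ0 + β * p * (ρ0 - ρ1) → ∀ π ∈ Set.Icc (0:ℝ) 1,
      lam + β * V ((1 - p) * π) lam ≤ π * ρ0 + (1 - π) * ρ1 + β * V 1 lam) := by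
  have hb1' : (0:ℝ) < 1 - β := by linarith
  have hmem : ∀ π ∈ Set.Icc (0:ℝ) 1, (1 - p) * π ∈ Set.Icc (0:ℝ) 1 := by
    rintro π ⟨h0, h1⟩
    constructor
    · nlinarith
    · nlinarith
  have h1mem : (1:ℝ) ∈ Set.Icc (0:ℝ) 1 := by norm_num
  constructor
  · -- λ ≥ ρ1 : V is constantly λ/(1-β)
    intro lam hlam π hπ
    set W : ℝ → ℝ := fun _ => lam / (1 - β) with hW
    have hWfix : ∀ σ ∈ Set.Icc (0:ℝ) 1,
        W σ = max (lam + β * W ((1 - p) * σ)) (σ * ρ0 + (1 - σ) * ρ1 + β * W 1) := by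
      rintro σ ⟨h0, h1⟩
      have ha : lam + β * (lam / (1 - β)) = lam / (1 - β) := by field_simp; ring
      have hb : σ * ρ0 + (1 - σ) * ρ1 + β * (lam / (1 - β)) ≤ lam + β * (lam / (1 - β)) := by
        have : σ * ρ0 + (1 - σ) * ρ1 ≤ ρ1 := by nlinarith
        linarith
      simp only [hW]
      rw [max_eq_left hb, ha]
    have hVW : ∀ σ ∈ Set.Icc (0:ℝ) 1, V σ lam = W σ := by
      apply bellman_uniq β hb0 hb1
      · obtain ⟨C, hC⟩ := hVbd lam
        exact ⟨C + |lam / (1 - β)|, fun σ hσ => by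
          calc |V σ lam - W σ| ≤ |V σ lam| + |W σ| := abs_sub _ _
            _ ≤ C + |lam / (1 - β)| := by exact add_le_add (hC σ hσ) (le_of_eq rfl)⟩
      · intro D hle σ hσ
        rw [hVeq lam σ hσ, hWfix σ hσ]
        have h1 := hle ((1 - p) * σ) (hmem σ hσ)
        have h2 := hle 1 h1mem
        have key := abs_max_sub_max_le_max
          (lam + β * V ((1 - p) * σ) lam) (σ * ρ0 + (1 - σ) * ρ1 + β * V 1 lam)
          (lam + β * W ((1 - p) * σ)) (σ * ρ0 + (1 - σ) * ρ1 + β * W 1)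
        refine le_trans key (max_le ?_ ?_)
        · have : lam + β * V ((1 - p) * σ) lam - (lam + β * W ((1 - p) * σ))
              = β * (V ((1 - p) * σ) lam - W ((1 - p) * σ)) := by ring
          rw [this, abs_mul, abs_of_pos hb0]
          exact mul_le_mul_of_nonneg_left h1 hb0.le
        · have : σ * ρ0 + (1 - σ) * ρ1 + β * V 1 lam - (σ * ρ0 + (1 - σ) * ρ1 + β * W 1)
              = β * (V 1 lam - W 1) := by ring
          rw [this, abs_mul, abs_of_pos hb0]
          exact mul_le_mul_of_nonneg_left h2 hb0.le
    obtain ⟨h0, h1⟩ := hπ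
    rw [hVW ((1 - p) * π) (hmem π ⟨h0, h1⟩), hVW 1 h1mem]
    simp only [hW]
    have : π * ρ0 + (1 - π) * ρ1 ≤ ρ1 := by nlinarith
    linarith
  · -- λ ≤ ρ0 + βp(ρ0-ρ1) : V π = π ρ0 + (1-π) ρ1 + β ρ0/(1-β)
    intro lam hlam π hπ
    set W : ℝ → ℝ := fun σ => σ * ρ0 + (1 - σ) * ρ1 + β * ρ0 / (1 - β) with hW
    have hWfix : ∀ σ ∈ Set.Icc (0:ℝ) 1,
        W σ = max (lam + β * W ((1 - p) * σ)) (σ * ρ0 + (1 - σ) * ρ1 + β * W 1) := by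
      rintro σ ⟨h0, h1⟩
      have hK : (1 - β) * (β * ρ0 / (1 - β)) = β * ρ0 := by
        field_simp
      have hprod : 0 ≤ (1 - σ) * ((ρ1 - ρ0) * (1 - β * (1 - p))) :=
        mul_nonneg (by linarith) (mul_nonneg (by linarith) (by nlinarith))
      have hb : σ * ρ0 + (1 - σ) * ρ1 + β * W 1 = W σ := by
        simp only [hW]
        linear_combination (-1) * hK
      have ha : lam + β * W ((1 - p) * σ) ≤ W σ := by
        simp only [hW]
        nlinarith [hK, hprod]
      rw [hb, max_eq_right ha]
    have hVW : ∀ σ ∈ Set.Icc (0:ℝ) 1, V σ lam = W σ := by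
      apply bellman_uniq β hb0 hb1
      · obtain ⟨C, hC⟩ := hVbd lam
        refine ⟨C + (ρ1 + |β * ρ0 / (1 - β)|), fun σ hσ => ?_⟩
        obtain ⟨h0, h1⟩ := hσ
        have hWb : |W σ| ≤ ρ1 + |β * ρ0 / (1 - β)| := by
          simp only [hW]
          refine le_trans (abs_add_le _ _) (add_le_add ?_ le_rfl)
          rw [abs_of_nonneg (by nlinarith)]
          nlinarith
        calc |V σ lam - W σ| ≤ |V σ lam| + |W σ| := abs_sub _ _
          _ ≤ C + (ρ1 + |β * ρ0 / (1 - β)|) := add_le_add (hC σ ⟨h0, h1⟩) hWb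
      · intro D hle σ hσ
        rw [hVeq lam σ hσ, hWfix σ hσ]
        have h1 := hle ((1 - p) * σ) (hmem σ hσ)
        have h2 := hle 1 h1mem
        have key := abs_max_sub_max_le_max
          (lam + β * V ((1 - p) * σ) lam) (σ * ρ0 + (1 - σ) * ρ1 + β * V 1 lam)
          (lam + β * W ((1 - p) * σ)) (σ * ρ0 + (1 - σ) * ρ1 + β * W 1)
        refine le_trans key (max_le ?_ ?_)
        · have : lam + β * V ((1 - p) * σ) lam - (lam + β * W ((1 - p) * σ))
              = β * (V ((1 - p) * σ) lam - W ((1 - p) * σ)) := by ring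
          rw [this, abs_mul, abs_of_pos hb0]
          exact mul_le_mul_of_nonneg_left h1 hb0.le
        · have : σ * ρ0 + (1 - σ) * ρ1 + β * V 1 lam - (σ * ρ0 + (1 - σ) * ρ1 + β * W 1)
              = β * (V 1 lam - W 1) := by ring
          rw [this, abs_mul, abs_of_pos hb0]
          exact mul_le_mul_of_nonneg_left h2 hb0.le
    obtain ⟨h0, h1⟩ := hπ
    rw [hVW ((1 - p) * π) (hmem π ⟨h0, h1⟩), hVW 1 h1mem]
    simp only [hW]
    have hK : (1 - β) * (β * ρ0 / (1 - β)) = β * ρ0 := by field_simp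
    have hprod : 0 ≤ (1 - π) * ((ρ1 - ρ0) * (1 - β * (1 - p))) :=
      mul_nonneg (by linarith) (mul_nonneg (by linarith) (by nlinarith))
    nlinarith [hK, hprod]
end

section
/- Set λ_H := ρ1 and λ_L := ρ1 + (1−β)·(ρ0 − ρ1) (equivalently λ_L = β·ρ1 + (1−β)·ρ0). If λ ≥ λ_H then V0(π,λ) ≥ V1(π,λ) for all π ∈ [0,1] (not playing is optimal at every belief), and if λ ≤ λ_L then V1(π,λ) ≥ V0(π,λ) for all π ∈ [0,1] (playing is optimal at every belief). -/
theorem stmt_5 (p ρ0 ρ1 β : ℝ)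
    (hp0 : 0 < p) (hp1 : p < 1) (hr0 : 0 < ρ0) (hr01 : ρ0 < ρ1) (hr1 : ρ1 < 1)
    (hb0 : 0 < β) (hb1 : β < 1)
    (V : ℝ → ℝ → ℝ)
    (hVbd : ∀ lam : ℝ, ∃ C : ℝ, ∀ π ∈ Set.Icc (0:ℝ) 1, |V π lam| ≤ C)
    (hVeq : ∀ lam : ℝ, ∀ π ∈ Set.Icc (0:ℝ) 1,
      V π lam = max (lam + β * V (π + p * (1 - π)) lam)
        (π * ρ0 + (1 - π) * ρ1 + β * V 0 lam)) :
    (∀ lam : ℝ, ρ1 ≤ lam → ∀ π ∈ Set.Icc (0:ℝ) 1,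
      π * ρ0 + (1 - π) * ρ1 + β * V 0 lam ≤ lam + β * V (π + p * (1 - π)) lam) ∧
    (∀ lam : ℝ, lam ≤ ρ1 + (1 - β) * (ρ0 - ρ1) → ∀ π ∈ Set.Icc (0:ℝ) 1,
      lam + β * V (π + p * (1 - π)) lam ≤ π * ρ0 + (1 - π) * ρ1 + β * V 0 lam) := by
  have hb1' : (0:ℝ) < 1 - β := by linarith
  have hI : ∀ π ∈ Set.Icc (0:ℝ) 1, π + p * (1 - π) ∈ Set.Icc (0:ℝ) 1 := by
    rintro π ⟨h0, h1⟩
    constructor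
    · nlinarith
    · nlinarith
  have h0I : (0:ℝ) ∈ Set.Icc (0:ℝ) 1 := by constructor <;> norm_num
  -- uniqueness of bounded fixed point
  have key : ∀ lam : ℝ, ∀ W : ℝ → ℝ,
      (∃ C : ℝ, ∀ π ∈ Set.Icc (0:ℝ) 1, |V π lam - W π| ≤ C) →
      (∀ π ∈ Set.Icc (0:ℝ) 1,
        W π = max (lam + β * W (π + p * (1 - π))) (π * ρ0 + (1 - π) * ρ1 + β * W 0)) →
      ∀ π ∈ Set.Icc (0:ℝ) 1, V π lam = W π := by
    rintro lam W ⟨C, hC⟩ hW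
    have main : ∀ n : ℕ, ∀ π ∈ Set.Icc (0:ℝ) 1, |V π lam - W π| ≤ β ^ n * C := by
      intro n
      induction n with
      | zero => simpa using hC
      | succ n ih =>
        intro π hπ
        have h1 := ih _ (hI π hπ)
        have h2 := ih 0 h0I
        rw [hVeq lam π hπ, hW π hπ]
        refine (abs_max_sub_max_le_max (lam + β * V (π + p * (1 - π)) lam)
          (π * ρ0 + (1 - π) * ρ1 + β * V 0 lam)
          (lam + β * W (π + p * (1 - π)))
          (π * ρ0 + (1 - π) * ρ1 + β * W 0)).trans ?_
        have e1 : lam + β * V (π + p * (1 - π)) lam - (lam + β * W (π + p * (1 - π)))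
            = β * (V (π + p * (1 - π)) lam - W (π + p * (1 - π))) := by ring
        have e2 : π * ρ0 + (1 - π) * ρ1 + β * V 0 lam - (π * ρ0 + (1 - π) * ρ1 + β * W 0)
            = β * (V 0 lam - W 0) := by ring
        rw [e1, e2, abs_mul, abs_mul, abs_of_pos hb0, pow_succ]
        have g1 := mul_le_mul_of_nonneg_left h1 hb0.le
        have g2 := mul_le_mul_of_nonneg_left h2 hb0.le
        apply max_le <;> nlinarith [pow_pos hb0 n]
    intro π hπ
    have hlim : Filter.Tendsto (fun n : ℕ => β ^ n * C) Filter.atTop (nhds 0) := by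
      simpa using (tendsto_pow_atTop_nhds_zero_of_lt_one hb0.le hb1).mul_const C
    have habs : |V π lam - W π| ≤ 0 :=
      ge_of_tendsto' hlim (fun n => main n π hπ)
    have := abs_nonneg (V π lam - W π)
    have : |V π lam - W π| = 0 := le_antisymm habs this
    have := abs_eq_zero.mp this
    linarith [this]
  constructor
  · -- λ ≥ ρ1 : V ≡ lam / (1 - β)
    intro lam hlam π hπ
    have hW : ∀ x ∈ Set.Icc (0:ℝ) 1,
        (fun _ : ℝ => lam / (1 - β)) x =
          max (lam + β * (fun _ : ℝ => lam / (1 - β)) (x + p * (1 - x)))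
            (x * ρ0 + (1 - x) * ρ1 + β * (fun _ : ℝ => lam / (1 - β)) 0) := by
      rintro x ⟨hx0, hx1⟩
      simp only
      have hfix : lam + β * (lam / (1 - β)) = lam / (1 - β) := by
        field_simp
        ring
      rw [max_eq_left]
      · exact hfix.symm
      · have hle : x * ρ0 + (1 - x) * ρ1 ≤ lam := by nlinarith
        linarith
    obtain ⟨C, hC⟩ := hVbd lam
    have hbd : ∃ C' : ℝ, ∀ x ∈ Set.Icc (0:ℝ) 1,
        |V x lam - (fun _ : ℝ => lam / (1 - β)) x| ≤ C' := by
      refine ⟨C + |lam / (1 - β)|, fun x hx => ?_⟩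
      have := hC x hx
      have h2 := abs_sub_le (V x lam) 0 (lam / (1 - β))
      simp only [sub_zero, zero_sub, abs_neg] at h2
      simp only
      linarith
    have hVW := key lam _ hbd hW
    have hV0 : V 0 lam = lam / (1 - β) := hVW 0 h0I
    have hVπ' : V (π + p * (1 - π)) lam = lam / (1 - β) := hVW _ (hI π hπ)
    rw [hV0, hVπ']
    obtain ⟨hπ0, hπ1⟩ := hπ
    nlinarith
  · -- λ ≤ λ_L : always play
    intro lam hlam π hπ
    set r : ℝ := ρ1 / (1 - β) with hr
    have hrr : (1 - β) * r = ρ1 := by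
      rw [hr]; field_simp
    set W : ℝ → ℝ := fun x => x * ρ0 + (1 - x) * ρ1 + β * r with hWdef
    have hW0 : W 0 = r := by
      simp only [hWdef]
      nlinarith
    have hplay : ∀ x : ℝ, x * ρ0 + (1 - x) * ρ1 + β * W 0 = W x := by
      intro x
      rw [hW0]
    have hnp : ∀ x ∈ Set.Icc (0:ℝ) 1, lam + β * W (x + p * (1 - x)) ≤ W x := by
      rintro x ⟨hx0, hx1⟩
      simp only [hWdef]
      nlinarith [mul_nonneg (mul_nonneg (by nlinarith : (0:ℝ) ≤ 1 - x)
        (by nlinarith : (0:ℝ) ≤ 1 - β * (1 - p))) (by linarith : (0:ℝ) ≤ ρ1 - ρ0)]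
    have hWB : ∀ x ∈ Set.Icc (0:ℝ) 1,
        W x = max (lam + β * W (x + p * (1 - x))) (x * ρ0 + (1 - x) * ρ1 + β * W 0) := by
      intro x hx
      rw [max_eq_right]
      · exact (hplay x).symm
      · rw [hplay x]; exact hnp x hx
    obtain ⟨C, hC⟩ := hVbd lam
    have hbd : ∃ C' : ℝ, ∀ x ∈ Set.Icc (0:ℝ) 1, |V x lam - W x| ≤ C' := by
      refine ⟨C + (|ρ0| + |ρ1| + |β * r|), fun x hx => ?_⟩
      have h1 := hC x hx
      have h2 := abs_sub_le (V x lam) 0 (W x)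
      simp only [sub_zero, zero_sub, abs_neg] at h2
      have h3 : |W x| ≤ |ρ0| + |ρ1| + |β * r| := by
        obtain ⟨hx0, hx1⟩ := hx
        simp only [hWdef]
        have := abs_add_le (x * ρ0 + (1 - x) * ρ1) (β * r)
        have h4 := abs_add_le (x * ρ0) ((1 - x) * ρ1)
        have h5 : |x * ρ0| ≤ |ρ0| := by
          rw [abs_mul]
          have : |x| ≤ 1 := by rw [abs_le]; constructor <;> linarith
          nlinarith [abs_nonneg ρ0]
        have h6 : |(1 - x) * ρ1| ≤ |ρ1| := by
          rw [abs_mul]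
          have : |1 - x| ≤ 1 := by rw [abs_le]; constructor <;> linarith
          nlinarith [abs_nonneg ρ1]
        linarith
      linarith
    have hVW := key lam W hbd hWB
    have hV0 : V 0 lam = W 0 := hVW 0 h0I
    have hVπ' : V (π + p * (1 - π)) lam = W (π + p * (1 - π)) := hVW _ (hI π hπ)
    rw [hV0, hVπ', hplay π]
    exact hnp π hπ
end

section
/- For every fixed λ ∈ ℝ and all π1, π2 ∈ [0,1], one has |V(π1,λ) − V(π2,λ)| ≤ (ρ1 − ρ0)·|π1 − π2|; that is, π ↦ V(π,λ) is Lipschitz on [0,1] with Lipschitz constant ρ1 − ρ0. -/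
theorem stmt_6 (p ρ0 ρ1 β : ℝ)
    (hp0 : 0 < p) (hp1 : p < 1) (hr0 : 0 < ρ0) (hr01 : ρ0 < ρ1) (hr1 : ρ1 < 1)
    (hb0 : 0 < β) (hb1 : β < 1)
    (V : ℝ → ℝ → ℝ)
    (hVbd : ∀ lam : ℝ, ∃ C : ℝ, ∀ π ∈ Set.Icc (0:ℝ) 1, |V π lam| ≤ C)
    (hVeq : ∀ lam : ℝ, ∀ π ∈ Set.Icc (0:ℝ) 1,
      V π lam = max (lam + β * V ((1 - p) * π) lam)
        (π * ρ0 + (1 - π) * ρ1 + β * V 1 lam)) :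
    ∀ lam : ℝ, ∀ π1 ∈ Set.Icc (0:ℝ) 1, ∀ π2 ∈ Set.Icc (0:ℝ) 1,
      |V π1 lam - V π2 lam| ≤ (ρ1 - ρ0) * |π1 - π2| := by
  intro lam
  obtain ⟨C, hC⟩ := hVbd lam
  have hC0 : 0 ≤ C := le_trans (abs_nonneg _) (hC 0 ⟨le_refl _, zero_le_one⟩)
  have hq : ∀ π ∈ Set.Icc (0:ℝ) 1, (1 - p) * π ∈ Set.Icc (0:ℝ) 1 := by
    intro π hπ
    constructor
    · exact mul_nonneg (by linarith) hπ.1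
    · nlinarith [hπ.1, hπ.2]
  have key : ∀ n : ℕ, ∀ π1 ∈ Set.Icc (0:ℝ) 1, ∀ π2 ∈ Set.Icc (0:ℝ) 1,
      |V π1 lam - V π2 lam| ≤ (ρ1 - ρ0) * |π1 - π2| + β ^ n * (2 * C) := by
    intro n
    induction n with
    | zero =>
      intro π1 h1 π2 h2
      have h1' := hC π1 h1
      have h2' := hC π2 h2
      have habs : |V π1 lam - V π2 lam| ≤ 2 * C := by
        calc |V π1 lam - V π2 lam| ≤ |V π1 lam| + |V π2 lam| := abs_sub _ _
        _ ≤ 2 * C := by linarith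
      have : 0 ≤ (ρ1 - ρ0) * |π1 - π2| :=
        mul_nonneg (by linarith) (abs_nonneg _)
      simpa using habs.trans (by linarith)
    | succ n ih =>
      intro π1 h1 π2 h2
      rw [hVeq lam π1 h1, hVeq lam π2 h2]
      refine le_trans (abs_max_sub_max_le_max _ _ _ _) (max_le ?_ ?_)
      · have e : (lam + β * V ((1 - p) * π1) lam) - (lam + β * V ((1 - p) * π2) lam)
            = β * (V ((1 - p) * π1) lam - V ((1 - p) * π2) lam) := by ring
        rw [e, abs_mul, abs_of_pos hb0]
        have hih := ih ((1 - p) * π1) (hq _ h1) ((1 - p) * π2) (hq _ h2)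
        have hdist : |(1 - p) * π1 - (1 - p) * π2| = (1 - p) * |π1 - π2| := by
          rw [← mul_sub, abs_mul, abs_of_pos (by linarith)]
        rw [hdist] at hih
        have h3 : β * |V ((1 - p) * π1) lam - V ((1 - p) * π2) lam|
            ≤ β * ((ρ1 - ρ0) * ((1 - p) * |π1 - π2|) + β ^ n * (2 * C)) :=
          mul_le_mul_of_nonneg_left hih (le_of_lt hb0)
        refine h3.trans ?_
        have habs : 0 ≤ |π1 - π2| := abs_nonneg _
        have hx : 0 ≤ (ρ1 - ρ0) * |π1 - π2| :=
          mul_nonneg (by linarith) habs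
        have h4 : β * ((ρ1 - ρ0) * ((1 - p) * |π1 - π2|)) ≤ (ρ1 - ρ0) * |π1 - π2| := by
          calc β * ((ρ1 - ρ0) * ((1 - p) * |π1 - π2|))
              = (β * (1 - p)) * ((ρ1 - ρ0) * |π1 - π2|) := by ring
            _ ≤ 1 * ((ρ1 - ρ0) * |π1 - π2|) :=
                mul_le_mul_of_nonneg_right (by nlinarith) hx
            _ = (ρ1 - ρ0) * |π1 - π2| := one_mul _
        have h5 : β * (β ^ n * (2 * C)) = β ^ (n + 1) * (2 * C) := by ring
        nlinarith
      · have e : (π1 * ρ0 + (1 - π1) * ρ1 + β * V 1 lam)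
            - (π2 * ρ0 + (1 - π2) * ρ1 + β * V 1 lam) = (ρ0 - ρ1) * (π1 - π2) := by ring
        rw [e, abs_mul, abs_sub_comm ρ0 ρ1, abs_of_pos (by linarith : (0:ℝ) < ρ1 - ρ0)]
        have hpow : 0 ≤ β ^ (n + 1) := pow_nonneg (le_of_lt hb0) _
        nlinarith
  intro π1 h1 π2 h2
  have hlim : Filter.Tendsto (fun n : ℕ => (ρ1 - ρ0) * |π1 - π2| + β ^ n * (2 * C))
      Filter.atTop (nhds ((ρ1 - ρ0) * |π1 - π2| + 0 * (2 * C))) := by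
    exact Filter.Tendsto.const_add _
      (((tendsto_pow_atTop_nhds_zero_of_lt_one (le_of_lt hb0) hb1)).mul_const _)
  rw [zero_mul, add_zero] at hlim
  exact ge_of_tendsto hlim (Filter.Eventually.of_forall fun n => key n π1 h1 π2 h2)
end

section
/- For every fixed λ ∈ ℝ, the function π ↦ V1(π,λ) − V0(π,λ) is strictly decreasing on [0,1]; i.e., for all 0 ≤ π1 < π2 ≤ 1, V1(π2,λ) − V0(π2,λ) < V1(π1,λ) − V0(π1,λ). -/
theorem stmt_8 (p ρ0 ρ1 β : ℝ)
    (hp0 : 0 < p) (hp1 : p < 1) (hr0 : 0 < ρ0) (hr01 : ρ0 < ρ1) (hr1 : ρ1 < 1)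
    (hb0 : 0 < β) (hb1 : β < 1)
    (V : ℝ → ℝ → ℝ)
    (hVbd : ∀ lam : ℝ, ∃ C : ℝ, ∀ π ∈ Set.Icc (0:ℝ) 1, |V π lam| ≤ C)
    (hVeq : ∀ lam : ℝ, ∀ π ∈ Set.Icc (0:ℝ) 1,
      V π lam = max (lam + β * V ((1 - p) * π) lam)
        (π * ρ0 + (1 - π) * ρ1 + β * V 1 lam)) :
    ∀ lam : ℝ, ∀ π1 π2 : ℝ, 0 ≤ π1 → π1 < π2 → π2 ≤ 1 →
      (π2 * ρ0 + (1 - π2) * ρ1 + β * V 1 lam) - (lam + β * V ((1 - p) * π2) lam) <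
      (π1 * ρ0 + (1 - π1) * ρ1 + β * V 1 lam) - (lam + β * V ((1 - p) * π1) lam) := by
  intro lam π1 π2 h0 h12 h2
  obtain ⟨C, hC⟩ := hVbd lam
  -- key iterated bound
  have key : ∀ n : ℕ, ∀ a b : ℝ, 0 ≤ a → a ≤ b → b ≤ 1 →
      V a lam - V b lam ≤ (b - a) * (ρ1 - ρ0) + β ^ n * (2 * C) := by
    intro n
    induction n with
    | zero =>
      intro a b ha hab hb
      have hA := hC a ⟨ha, hab.trans hb⟩
      have hB := hC b ⟨ha.trans hab, hb⟩
      have := abs_le.1 hA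
      have := abs_le.1 hB
      nlinarith [mul_nonneg (sub_nonneg.2 hab) (sub_nonneg.2 hr01.le)]
    | succ n ih =>
      intro a b ha hab hb
      have haI : a ∈ Set.Icc (0:ℝ) 1 := ⟨ha, hab.trans hb⟩
      have hbI : b ∈ Set.Icc (0:ℝ) 1 := ⟨ha.trans hab, hb⟩
      have hp' : 0 ≤ 1 - p := by linarith
      have hp'' : 1 - p ≤ 1 := by linarith
      have hrec := ih ((1 - p) * a) ((1 - p) * b) (by positivity)
        (by nlinarith) (by nlinarith)
      rw [hVeq lam a haI, hVeq lam b hbI]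
      have hCpos : 0 ≤ C := (abs_nonneg _).trans (hC 0 ⟨le_refl 0, zero_le_one⟩)
      have hbn : 0 < β ^ n := pow_pos hb0 n
      apply (max_sub_max_le_max _ _ _ _).trans
      have h2C : (0:ℝ) ≤ 2 * C := by linarith
      have hpow : β ^ (n+1) * (2*C) = β * (β ^ n * (2*C)) := by ring
      apply max_le
      · have hmul : β * (V ((1-p)*a) lam - V ((1-p)*b) lam) ≤
          β * (((1-p)*b - (1-p)*a) * (ρ1 - ρ0)) + β * (β ^ n * (2 * C)) := by
          have := mul_le_mul_of_nonneg_left hrec hb0.le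
          rw [mul_add] at this; exact this
        have haux : β * (((1-p)*b - (1-p)*a) * (ρ1 - ρ0)) ≤ (b - a) * (ρ1 - ρ0) := by
          have h1 : (0:ℝ) ≤ 1 - β * (1 - p) := by nlinarith
          have h2 : (0:ℝ) ≤ (b - a) * (ρ1 - ρ0) :=
            mul_nonneg (by linarith) (by linarith)
          nlinarith [mul_nonneg h1 h2]
        rw [hpow]
        linarith
      · have : (0:ℝ) ≤ β ^ (n+1) * (2*C) :=
          mul_nonneg (pow_pos hb0 (n+1)).le h2C
        linarith
  have key' : ∀ a b : ℝ, 0 ≤ a → a ≤ b → b ≤ 1 →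
      V a lam - V b lam ≤ (b - a) * (ρ1 - ρ0) := by
    intro a b ha hab hb
    have hlim : Filter.Tendsto (fun n : ℕ => (b - a) * (ρ1 - ρ0) + β ^ n * (2 * C))
        Filter.atTop (nhds ((b - a) * (ρ1 - ρ0) + 0 * (2 * C))) := by
      exact (tendsto_const_nhds.add
        ((tendsto_pow_atTop_nhds_zero_of_lt_one (by linarith) hb1).mul_const _))
    have := ge_of_tendsto hlim (Filter.Eventually.of_forall fun n => key n a b ha hab hb)
    simpa using this
  have hmain := key' ((1 - p) * π1) ((1 - p) * π2) (by nlinarith)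
    (by nlinarith) (by nlinarith)
  have hβp : β * (1 - p) < 1 := by nlinarith
  have h1 : β * (V ((1-p)*π1) lam - V ((1-p)*π2) lam) ≤
      β * (((1-p)*π2 - (1-p)*π1) * (ρ1 - ρ0)) := mul_le_mul_of_nonneg_left hmain hb0.le
  nlinarith [mul_pos (sub_pos.2 h12) (sub_pos.2 hr01)]
end

section
/- For every fixed λ ∈ ℝ, the function π ↦ V1(π,λ) − V0(π,λ) is strictly decreasing on [0,1]; i.e., for all 0 ≤ π1 < π2 ≤ 1, V1(π2,λ) − V0(π2,λ) < V1(π1,λ) − V0(π1,λ). -/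
theorem stmt_9 (p ρ0 ρ1 β : ℝ)
    (hp0 : 0 < p) (hp1 : p < 1) (hr0 : 0 < ρ0) (hr01 : ρ0 < ρ1) (hr1 : ρ1 < 1)
    (hb0 : 0 < β) (hb1 : β < 1)
    (V : ℝ → ℝ → ℝ)
    (hVbd : ∀ lam : ℝ, ∃ C : ℝ, ∀ π ∈ Set.Icc (0:ℝ) 1, |V π lam| ≤ C)
    (hVeq : ∀ lam : ℝ, ∀ π ∈ Set.Icc (0:ℝ) 1,
      V π lam = max (lam + β * V (π + p * (1 - π)) lam)
        (π * ρ0 + (1 - π) * ρ1 + β * V 0 lam)) :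
    ∀ lam : ℝ, ∀ π1 π2 : ℝ, 0 ≤ π1 → π1 < π2 → π2 ≤ 1 →
      (π2 * ρ0 + (1 - π2) * ρ1 + β * V 0 lam) - (lam + β * V (π2 + p * (1 - π2)) lam) <
      (π1 * ρ0 + (1 - π1) * ρ1 + β * V 0 lam) - (lam + β * V (π1 + p * (1 - π1)) lam) := by
  intro lam π1 π2 h0 h12 h21
  obtain ⟨C, hC⟩ := hVbd lam
  have hC0 : 0 ≤ C := le_trans (abs_nonneg _) (hC 0 ⟨le_refl _, by norm_num⟩)
  -- key Lipschitz bound with geometric error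
  have key : ∀ n : ℕ, ∀ x y : ℝ, 0 ≤ x → x ≤ y → y ≤ 1 →
      V x lam - V y lam ≤ (ρ1 - ρ0) * (y - x) + β ^ n * (2 * C) := by
    intro n
    induction n with
    | zero =>
      intro x y hx hxy hy1
      have h1 := abs_le.mp (hC x ⟨hx, le_trans hxy hy1⟩)
      have h2 := abs_le.mp (hC y ⟨le_trans hx hxy, hy1⟩)
      nlinarith
    | succ n ih =>
      intro x y hx hxy hy1
      have hfx : x + p * (1 - x) ∈ Set.Icc (0:ℝ) 1 := by
        constructor <;> nlinarith
      have hfy : y + p * (1 - y) ∈ Set.Icc (0:ℝ) 1 := by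
        constructor <;> nlinarith
      have hfle : x + p * (1 - x) ≤ y + p * (1 - y) := by nlinarith
      have hrec := ih (x + p * (1 - x)) (y + p * (1 - y)) hfx.1 hfle hfy.2
      rw [hVeq lam x ⟨hx, le_trans hxy hy1⟩, hVeq lam y ⟨le_trans hx hxy, hy1⟩]
      have hpow : β ^ (n + 1) = β * β ^ n := by ring
      have hpownn : (0:ℝ) ≤ β ^ n := pow_nonneg hb0.le n
      refine le_trans (max_sub_max_le_max _ _ _ _) (max_le ?_ ?_)
      · have hmul : β * (V (x + p * (1 - x)) lam - V (y + p * (1 - y)) lam) ≤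
            β * ((ρ1 - ρ0) * (y + p * (1 - y) - (x + p * (1 - x))) + β ^ n * (2 * C)) :=
          mul_le_mul_of_nonneg_left hrec hb0.le
        rw [mul_sub] at hmul
        have hprod : (0:ℝ) ≤ (ρ1 - ρ0) * (y - x) * (1 - β * (1 - p)) := by
          apply mul_nonneg (mul_nonneg (by linarith) (by linarith))
          nlinarith
        nlinarith
      · nlinarith [mul_nonneg (mul_nonneg hb0.le hpownn) (by linarith : (0:ℝ) ≤ 2 * C)]
  have h1le : π1 ≤ 1 := le_trans h12.le h21
  have hlim : V (π1 + p * (1 - π1)) lam - V (π2 + p * (1 - π2)) lam ≤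
      (ρ1 - ρ0) * ((π2 + p * (1 - π2)) - (π1 + p * (1 - π1))) := by
    have hfle : π1 + p * (1 - π1) ≤ π2 + p * (1 - π2) := by nlinarith
    have htend : Filter.Tendsto
        (fun n : ℕ => (ρ1 - ρ0) * ((π2 + p * (1 - π2)) - (π1 + p * (1 - π1))) + β ^ n * (2 * C))
        Filter.atTop (nhds ((ρ1 - ρ0) * ((π2 + p * (1 - π2)) - (π1 + p * (1 - π1))))) := by
      have hb : Filter.Tendsto (fun n : ℕ => β ^ n * (2 * C)) Filter.atTop (nhds 0) := by
        have := (tendsto_pow_atTop_nhds_zero_of_lt_one hb0.le hb1).mul_const (2 * C)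
        simpa using this
      simpa using (tendsto_const_nhds.add hb)
    refine ge_of_tendsto htend (Filter.Eventually.of_forall fun n => ?_)
    exact key n _ _ (by nlinarith) hfle (by nlinarith)
  have hmul : β * (V (π1 + p * (1 - π1)) lam - V (π2 + p * (1 - π2)) lam) ≤
      β * ((ρ1 - ρ0) * ((π2 + p * (1 - π2)) - (π1 + p * (1 - π1)))) :=
    mul_le_mul_of_nonneg_left hlim hb0.le
  rw [mul_sub] at hmul
  have hfinal : β * ((ρ1 - ρ0) * ((π2 + p * (1 - π2)) - (π1 + p * (1 - π1)))) <
      (ρ1 - ρ0) * (π2 - π1) := by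
    have hprod : (0:ℝ) < (ρ1 - ρ0) * (π2 - π1) * (1 - β * (1 - p)) := by
      apply mul_pos (mul_pos (by linarith) (by linarith))
      nlinarith
    nlinarith
  nlinarith
end

section
/- Let λ_L := ρ0 + β·p·(ρ0 − ρ1) and λ_H := ρ1, and let λ ∈ [λ_L, λ_H]. Then the optimal policy is of threshold type with a single threshold: there exists a unique π_T ∈ [0,1] such that V1(π_T,λ) = V0(π_T,λ), and for all π ∈ [0,1], V(π,λ) = V1(π,λ) if π ≤ π_T, while V(π,λ) = V0(π,λ) if π ≥ π_T. -/
theorem stmt_10 (p ρ0 ρ1 β lam : ℝ)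
    (hp0 : 0 < p) (hp1 : p < 1) (hr0 : 0 < ρ0) (hr01 : ρ0 < ρ1) (hr1 : ρ1 < 1)
    (hb0 : 0 < β) (hb1 : β < 1)
    (V : ℝ → ℝ → ℝ)
    (hVbd : ∀ lam : ℝ, ∃ C : ℝ, ∀ π ∈ Set.Icc (0:ℝ) 1, |V π lam| ≤ C)
    (hVeq : ∀ lam : ℝ, ∀ π ∈ Set.Icc (0:ℝ) 1,
      V π lam = max (lam + β * V ((1 - p) * π) lam)
        (π * ρ0 + (1 - π) * ρ1 + β * V 1 lam))
    (hlam : lam ∈ Set.Icc (ρ0 + β * p * (ρ0 - ρ1)) ρ1) :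
    ∃ πT ∈ Set.Icc (0:ℝ) 1,
      (πT * ρ0 + (1 - πT) * ρ1 + β * V 1 lam = lam + β * V ((1 - p) * πT) lam) ∧
      (∀ π' ∈ Set.Icc (0:ℝ) 1,
        π' * ρ0 + (1 - π') * ρ1 + β * V 1 lam = lam + β * V ((1 - p) * π') lam → π' = πT) ∧
      (∀ π ∈ Set.Icc (0:ℝ) 1,
        (π ≤ πT → V π lam = π * ρ0 + (1 - π) * ρ1 + β * V 1 lam) ∧
        (πT ≤ π → V π lam = lam + β * V ((1 - p) * π) lam)) := by
  obtain ⟨C₀, hC₀⟩ := hVbd lam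
  set C := max C₀ 0 with hCdef
  have hC : ∀ π ∈ Set.Icc (0:ℝ) 1, |V π lam| ≤ C :=
    fun π hπ => (hC₀ π hπ).trans (le_max_left _ _)
  have hCpos : (0:ℝ) ≤ C := le_max_right _ _
  have hr : (0:ℝ) < ρ1 - ρ0 := by linarith
  have hb1' : (0:ℝ) < 1 - β := by linarith
  have h0mem : (0:ℝ) ∈ Set.Icc (0:ℝ) 1 := by constructor <;> norm_num
  have h1mem : (1:ℝ) ∈ Set.Icc (0:ℝ) 1 := by constructor <;> norm_num
  have hmem : ∀ π ∈ Set.Icc (0:ℝ) 1, (1 - p) * π ∈ Set.Icc (0:ℝ) 1 := by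
    intro π hπ
    constructor
    · exact mul_nonneg (by linarith) hπ.1
    · nlinarith [hπ.1, hπ.2]
  -- Lipschitz bound with error term, by induction
  have key : ∀ n : ℕ, ∀ π ∈ Set.Icc (0:ℝ) 1, ∀ π' ∈ Set.Icc (0:ℝ) 1,
      |V π lam - V π' lam| ≤ (ρ1 - ρ0) * |π - π'| + β ^ n * (2 * C) := by
    intro n
    induction n with
    | zero =>
      intro π hπ π' hπ'
      have h1 := hC π hπ
      have h2 := hC π' hπ'
      have h3 : |V π lam - V π' lam| ≤ |V π lam| + |V π' lam| := abs_sub _ _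
      have h4 : (0:ℝ) ≤ (ρ1 - ρ0) * |π - π'| :=
        mul_nonneg hr.le (abs_nonneg _)
      simp only [pow_zero, one_mul]
      linarith
    | succ n ih =>
      intro π hπ π' hπ'
      rw [hVeq lam π hπ, hVeq lam π' hπ']
      have habsnn : (0:ℝ) ≤ |π - π'| := abs_nonneg _
      have h1 : |(lam + β * V ((1 - p) * π) lam) - (lam + β * V ((1 - p) * π') lam)|
          ≤ (ρ1 - ρ0) * |π - π'| + β ^ (n + 1) * (2 * C) := by
        have hih := ih ((1 - p) * π) (hmem π hπ) ((1 - p) * π') (hmem π' hπ')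
        have habs : |(1 - p) * π - (1 - p) * π'| = (1 - p) * |π - π'| := by
          rw [← mul_sub, abs_mul, abs_of_nonneg (by linarith : (0:ℝ) ≤ 1 - p)]
        rw [habs] at hih
        have heq : (lam + β * V ((1 - p) * π) lam) - (lam + β * V ((1 - p) * π') lam)
            = β * (V ((1 - p) * π) lam - V ((1 - p) * π') lam) := by ring
        rw [heq, abs_mul, abs_of_nonneg hb0.le]
        have hpow : (0:ℝ) ≤ β ^ n := pow_nonneg hb0.le n
        have hmm := mul_le_mul_of_nonneg_left hih hb0.le
        rw [mul_add] at hmm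
        have e1 : β * ((ρ1 - ρ0) * ((1 - p) * |π - π'|)) ≤ (ρ1 - ρ0) * |π - π'| := by
          nlinarith [mul_nonneg (mul_nonneg hr.le habsnn)
            (show (0:ℝ) ≤ 1 - β * (1 - p) by nlinarith)]
        have e2 : β * (β ^ n * (2 * C)) = β ^ (n + 1) * (2 * C) := by ring
        linarith
      have h2 : |(π * ρ0 + (1 - π) * ρ1 + β * V 1 lam)
            - (π' * ρ0 + (1 - π') * ρ1 + β * V 1 lam)|
          ≤ (ρ1 - ρ0) * |π - π'| + β ^ (n + 1) * (2 * C) := by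
        have heq : (π * ρ0 + (1 - π) * ρ1 + β * V 1 lam)
            - (π' * ρ0 + (1 - π') * ρ1 + β * V 1 lam) = (ρ0 - ρ1) * (π - π') := by ring
        rw [heq, abs_mul, abs_of_nonpos (by linarith : ρ0 - ρ1 ≤ 0)]
        have hpow : (0:ℝ) ≤ β ^ (n + 1) * (2 * C) :=
          mul_nonneg (pow_nonneg hb0.le _) (by linarith)
        nlinarith
      exact (abs_max_sub_max_le_max _ _ _ _).trans (max_le h1 h2)
  have hpowlim : Filter.Tendsto (fun n : ℕ => β ^ n) Filter.atTop (nhds 0) :=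
    tendsto_pow_atTop_nhds_zero_of_lt_one hb0.le hb1
  -- Lipschitz property
  have hLip : ∀ π ∈ Set.Icc (0:ℝ) 1, ∀ π' ∈ Set.Icc (0:ℝ) 1,
      |V π lam - V π' lam| ≤ (ρ1 - ρ0) * |π - π'| := by
    intro π hπ π' hπ'
    have htend : Filter.Tendsto (fun n : ℕ => (ρ1 - ρ0) * |π - π'| + β ^ n * (2 * C))
        Filter.atTop (nhds ((ρ1 - ρ0) * |π - π'|)) := by
      have := (hpowlim.mul_const (2 * C)).const_add ((ρ1 - ρ0) * |π - π'|)
      simpa using this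
    exact ge_of_tendsto' htend (fun n => key n π hπ π' hπ')
  -- V ≥ V0 and V ≥ V1 pointwise
  have hgeg : ∀ π ∈ Set.Icc (0:ℝ) 1, lam + β * V ((1 - p) * π) lam ≤ V π lam :=
    fun π hπ => (hVeq lam π hπ) ▸ le_max_left _ _
  have hgef : ∀ π ∈ Set.Icc (0:ℝ) 1,
      π * ρ0 + (1 - π) * ρ1 + β * V 1 lam ≤ V π lam :=
    fun π hπ => (hVeq lam π hπ) ▸ le_max_right _ _
  -- V ≥ lam/(1-β)
  set M := lam / (1 - β) with hMdef
  have hMeq : lam + β * M = M := by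
    rw [hMdef]; field_simp; ring
  set K := C + |M| with hKdef
  have hlown : ∀ n : ℕ, ∀ π ∈ Set.Icc (0:ℝ) 1, M - β ^ n * K ≤ V π lam := by
    intro n
    induction n with
    | zero =>
      intro π hπ
      have h1 := hC π hπ
      have h2 : M ≤ |M| := le_abs_self _
      have h3 : -C ≤ V π lam := neg_le_of_abs_le h1
      simp only [pow_zero, one_mul, hKdef]
      linarith
    | succ n ih =>
      intro π hπ
      have h1 := ih ((1 - p) * π) (hmem π hπ)
      have h2 := hgeg π hπ
      have h3 := mul_le_mul_of_nonneg_left h1 hb0.le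
      have : lam + β * (M - β ^ n * K) ≤ lam + β * V ((1 - p) * π) lam := by linarith
      calc M - β ^ (n + 1) * K = lam + β * (M - β ^ n * K) := by linear_combination -hMeq
        _ ≤ V π lam := this.trans h2
  have hMle : ∀ π ∈ Set.Icc (0:ℝ) 1, M ≤ V π lam := by
    intro π hπ
    have htend : Filter.Tendsto (fun n : ℕ => M - β ^ n * K) Filter.atTop (nhds M) := by
      have := (hpowlim.mul_const K).const_sub M
      simpa using this
    exact le_of_tendsto' htend (fun n => hlown n π hπ)
  -- the gap function
  set D : ℝ → ℝ := fun π =>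
    (π * ρ0 + (1 - π) * ρ1 + β * V 1 lam) - (lam + β * V ((1 - p) * π) lam) with hD
  -- D 0 ≥ 0
  have hD0 : 0 ≤ D 0 := by
    by_contra hcon
    push_neg at hcon
    simp only [hD] at hcon
    have hV0 : V 0 lam = lam + β * V ((1 - p) * 0) lam := by
      rw [hVeq lam 0 h0mem]
      exact max_eq_left (by linarith)
    rw [show (1 - p) * (0:ℝ) = 0 by ring] at hV0 hcon
    -- V 0 = M
    have hMlam : (1 - β) * M = lam := by rw [hMdef]; field_simp
    have hV0M : V 0 lam = M := by
      have : (1 - β) * V 0 lam = lam := by linarith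
      have := this.trans hMlam.symm
      exact mul_left_cancel₀ (ne_of_gt hb1') this
    have hV1 := hMle 1 h1mem
    have h4 : β * V 0 lam = β * M := by rw [hV0M]
    have h5 : β * M ≤ β * V 1 lam := mul_le_mul_of_nonneg_left hV1 hb0.le
    linarith [hlam.2]
  -- D 1 ≤ 0
  have hD1 : D 1 ≤ 0 := by
    by_contra hcon
    push_neg at hcon
    simp only [hD] at hcon
    have hV1 : V 1 lam = 1 * ρ0 + (1 - 1) * ρ1 + β * V 1 lam := by
      have hmax := hVeq lam 1 h1mem
      rwa [max_eq_right (by linarith : lam + β * V ((1 - p) * 1) lam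
        ≤ 1 * ρ0 + (1 - 1) * ρ1 + β * V 1 lam)] at hmax
    have hfp := hgef ((1 - p) * 1) (hmem 1 h1mem)
    have hlamlo := hlam.1
    have h6 := mul_le_mul_of_nonneg_left hfp hb0.le
    have h7 : β * V 1 lam = β * ρ0 + β * (β * V 1 lam) := by linear_combination β * hV1
    nlinarith [h6, h7]
  -- D strictly decreasing on Icc
  have hstrict : ∀ π ∈ Set.Icc (0:ℝ) 1, ∀ π' ∈ Set.Icc (0:ℝ) 1, π < π' → D π' < D π := by
    intro π hπ π' hπ' hlt
    have h := hLip ((1 - p) * π) (hmem π hπ) ((1 - p) * π') (hmem π' hπ')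
    rw [show (1 - p) * π - (1 - p) * π' = (1 - p) * (π - π') by ring, abs_mul,
      abs_of_nonneg (by linarith : (0:ℝ) ≤ 1 - p),
      abs_of_nonpos (by linarith : π - π' ≤ 0)] at h
    obtain ⟨hl, hu⟩ := abs_le.mp h
    have h3u := mul_le_mul_of_nonneg_left hu hb0.le
    simp only [hD]
    nlinarith [h3u, mul_pos (mul_pos hr (sub_pos.mpr hlt))
      (show (0:ℝ) < 1 - β * (1 - p) by nlinarith)]
  -- D antitone
  have hanti : ∀ π ∈ Set.Icc (0:ℝ) 1, ∀ π' ∈ Set.Icc (0:ℝ) 1, π ≤ π' → D π' ≤ D π := by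
    intro π hπ π' hπ' hle
    rcases eq_or_lt_of_le hle with rfl | h
    · exact le_refl _
    · exact (hstrict π hπ π' hπ' h).le
  -- continuity of D
  have hDcont : ContinuousOn D (Set.Icc (0:ℝ) 1) := by
    have hL : (0:ℝ) ≤ (ρ1 - ρ0) * (1 + β) := mul_nonneg hr.le (by linarith)
    apply LipschitzOnWith.continuousOn (K := Real.toNNReal ((ρ1 - ρ0) * (1 + β)))
    apply LipschitzOnWith.of_dist_le_mul
    intro x hx y hy
    rw [Real.dist_eq, Real.dist_eq, Real.coe_toNNReal _ hL]
    have h := hLip ((1 - p) * x) (hmem x hx) ((1 - p) * y) (hmem y hy)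
    rw [show (1 - p) * x - (1 - p) * y = (1 - p) * (x - y) by ring, abs_mul,
      abs_of_nonneg (by linarith : (0:ℝ) ≤ 1 - p)] at h
    have heq : D x - D y = (ρ0 - ρ1) * (x - y)
        + (-β) * (V ((1 - p) * x) lam - V ((1 - p) * y) lam) := by
      simp only [hD]; ring
    calc |D x - D y| ≤ |(ρ0 - ρ1) * (x - y)|
          + |(-β) * (V ((1 - p) * x) lam - V ((1 - p) * y) lam)| := by
          rw [heq]; exact abs_add_le _ _
      _ ≤ (ρ1 - ρ0) * |x - y| + β * ((ρ1 - ρ0) * ((1 - p) * |x - y|)) := by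
          rw [abs_mul, abs_mul, abs_of_nonpos (by linarith : ρ0 - ρ1 ≤ 0), abs_neg,
            abs_of_nonneg hb0.le]
          have := mul_le_mul_of_nonneg_left h hb0.le
          linarith
      _ ≤ (ρ1 - ρ0) * (1 + β) * |x - y| := by
          nlinarith [mul_nonneg (mul_nonneg (mul_nonneg hb0.le hr.le) hp0.le)
            (abs_nonneg (x - y))]
  -- IVT
  have hsub := intermediate_value_Icc' (by norm_num : (0:ℝ) ≤ 1) hDcont
  obtain ⟨πT, hπT, hDT⟩ := hsub ⟨hD1, hD0⟩
  refine ⟨πT, hπT, ?_, ?_, ?_⟩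
  · simp only [hD] at hDT; linarith
  · intro π' hπ' heq
    have hDπ' : D π' = 0 := by simp only [hD]; linarith
    by_contra hne
    rcases lt_or_gt_of_ne hne with h | h
    · have := hstrict π' hπ' πT hπT h
      rw [hDT, hDπ'] at this; exact lt_irrefl _ this
    · have := hstrict πT hπT π' hπ' h
      rw [hDT, hDπ'] at this; exact lt_irrefl _ this
  · intro π hπ
    constructor
    · intro hle
      have hDge : 0 ≤ D π := hDT ▸ hanti π hπ πT hπT hle
      simp only [hD] at hDge
      rw [hVeq lam π hπ]
      exact max_eq_right (by linarith)
    · intro hle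
      have hDle : D π ≤ 0 := hDT ▸ hanti πT hπT π hπ hle
      simp only [hD] at hDle
      rw [hVeq lam π hπ]
      exact max_eq_left (by linarith)
end

section
/- Let λ_L := ρ1 + (1−β)·(ρ0 − ρ1) and λ_H := ρ1, and let λ ∈ [λ_L, λ_H]. Then the optimal policy is of threshold type with a single threshold: there exists a unique π_T ∈ [0,1] such that V1(π_T,λ) = V0(π_T,λ), and for all π ∈ [0,1], V(π,λ) = V1(π,λ) if π ≤ π_T, while V(π,λ) = V0(π,λ) if π ≥ π_T. -/
set_option maxHeartbeats 1000000


theorem stmt_11 (p ρ0 ρ1 β lam : ℝ)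
    (hp0 : 0 < p) (hp1 : p < 1) (hr0 : 0 < ρ0) (hr01 : ρ0 < ρ1) (hr1 : ρ1 < 1)
    (hb0 : 0 < β) (hb1 : β < 1)
    (V : ℝ → ℝ → ℝ)
    (hVbd : ∀ lam : ℝ, ∃ C : ℝ, ∀ π ∈ Set.Icc (0:ℝ) 1, |V π lam| ≤ C)
    (hVeq : ∀ lam : ℝ, ∀ π ∈ Set.Icc (0:ℝ) 1,
      V π lam = max (lam + β * V (π + p * (1 - π)) lam)
        (π * ρ0 + (1 - π) * ρ1 + β * V 0 lam))
    (hlam : lam ∈ Set.Icc (ρ1 + (1 - β) * (ρ0 - ρ1)) ρ1) :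
    ∃ πT ∈ Set.Icc (0:ℝ) 1,
      (πT * ρ0 + (1 - πT) * ρ1 + β * V 0 lam = lam + β * V (πT + p * (1 - πT)) lam) ∧
      (∀ π' ∈ Set.Icc (0:ℝ) 1,
        π' * ρ0 + (1 - π') * ρ1 + β * V 0 lam = lam + β * V (π' + p * (1 - π')) lam →
          π' = πT) ∧
      (∀ π ∈ Set.Icc (0:ℝ) 1,
        (π ≤ πT → V π lam = π * ρ0 + (1 - π) * ρ1 + β * V 0 lam) ∧
        (πT ≤ π → V π lam = lam + β * V (π + p * (1 - π)) lam)) := by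
  obtain ⟨hlamL, hlamH⟩ := hlam
  have hb' : (0:ℝ) < 1 - β := by linarith
  have hd : (0:ℝ) < ρ1 - ρ0 := by linarith
  set c : ℝ := lam / (1 - β) with hc
  set g : ℝ → ℝ := fun x => x * ρ0 + (1 - x) * ρ1 + β * (ρ1 / (1 - β)) with hg
  set W : ℝ → ℝ := fun x => max (g x) c with hWdef
  have hcβ : lam + β * c = c := by rw [hc]; field_simp; ring
  have hg0 : g 0 = ρ1 / (1 - β) := by simp only [hg]; field_simp; ring
  have hcle : c ≤ ρ1 / (1 - β) := by
    rw [hc, div_le_div_iff₀ hb' hb']; nlinarith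
  have hW0 : W 0 = ρ1 / (1 - β) := by
    simp only [hWdef, hg0]; exact max_eq_left hcle
  have hgmono : ∀ x y : ℝ, x ≤ y → g y ≤ g x := by
    intro x y h; simp only [hg]; nlinarith
  have hfmem : ∀ π ∈ Set.Icc (0:ℝ) 1, π + p * (1 - π) ∈ Set.Icc (0:ℝ) 1 := by
    rintro π ⟨h0, h1⟩; constructor <;> nlinarith
  -- W satisfies the Bellman equation
  have hWbell : ∀ π ∈ Set.Icc (0:ℝ) 1,
      W π = max (lam + β * W (π + p * (1 - π))) (π * ρ0 + (1 - π) * ρ1 + β * W 0) := by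
    rintro π ⟨h0, h1⟩
    have hfge : π ≤ π + p * (1 - π) := by nlinarith
    rw [hW0]
    have hrhs2 : π * ρ0 + (1 - π) * ρ1 + β * (ρ1 / (1 - β)) = g π := rfl
    rw [hrhs2]
    rcases le_total (g (π + p * (1 - π))) c with hle | hge
    · have hWf : W (π + p * (1 - π)) = c := max_eq_right hle
      rw [hWf, hcβ]
      exact max_comm _ _
    · have hWf : W (π + p * (1 - π)) = g (π + p * (1 - π)) := max_eq_left hge
      rw [hWf]
      have hlam' : lam ≤ (1 - β) * g (π + p * (1 - π)) := by
        rw [hc, div_le_iff₀ hb'] at hge; linarith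
      have h1' : lam + β * g (π + p * (1 - π)) ≤ g π := by
        have := hgmono π (π + p * (1 - π)) hfge
        linarith
      have h2' : c ≤ g π := by
        have : c ≤ g (π + p * (1 - π)) := hge
        linarith [hgmono π (π + p * (1 - π)) hfge]
      simp only [hWdef]
      rw [max_eq_left h2', max_eq_right h1']
  -- V = W on [0,1] by contraction
  obtain ⟨C, hC⟩ := hVbd lam
  have hWbd : ∀ π ∈ Set.Icc (0:ℝ) 1, |W π| ≤ |g 0| + |c| := by
    rintro π ⟨h0, h1⟩
    have hgle := hgmono 0 π h0
    have h1 : W π ≤ |g 0| + |c| := by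
      simp only [hWdef]
      apply max_le
      · linarith [le_abs_self (g 0), neg_abs_le c, abs_nonneg c]
      · linarith [le_abs_self c, abs_nonneg (g 0)]
    have h2 : -(|g 0| + |c|) ≤ W π := by
      have : c ≤ W π := le_max_right _ _
      linarith [neg_abs_le c, abs_nonneg (g 0)]
    exact abs_le.mpr ⟨h2, h1⟩
  set S := (fun π => |V π lam - W π|) '' Set.Icc (0:ℝ) 1 with hS
  have hSne : S.Nonempty := ⟨_, ⟨0, by norm_num, rfl⟩⟩
  have hSbdd : BddAbove S := by
    refine ⟨C + (|g 0| + |c|), ?_⟩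
    rintro _ ⟨π, hπ, rfl⟩
    have h1 := abs_le.mp (hC π hπ)
    have h2 := abs_le.mp (hWbd π hπ)
    exact abs_le.mpr ⟨by linarith, by linarith⟩
  set M := sSup S with hM
  have hMmem : ∀ π ∈ Set.Icc (0:ℝ) 1, |V π lam - W π| ≤ M :=
    fun π hπ => le_csSup hSbdd ⟨π, hπ, rfl⟩
  have hkey : ∀ π ∈ Set.Icc (0:ℝ) 1, |V π lam - W π| ≤ β * M := by
    intro π hπ
    rw [hVeq lam π hπ, hWbell π hπ]
    have h1 := abs_max_sub_max_le_max (lam + β * V (π + p * (1 - π)) lam)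
      (π * ρ0 + (1 - π) * ρ1 + β * V 0 lam)
      (lam + β * W (π + p * (1 - π)))
      (π * ρ0 + (1 - π) * ρ1 + β * W 0)
    have e1 : |(lam + β * V (π + p * (1 - π)) lam) - (lam + β * W (π + p * (1 - π)))|
        = β * |V (π + p * (1 - π)) lam - W (π + p * (1 - π))| := by
      rw [show (lam + β * V (π + p * (1 - π)) lam) - (lam + β * W (π + p * (1 - π)))
        = β * (V (π + p * (1 - π)) lam - W (π + p * (1 - π))) by ring,
        abs_mul, abs_of_pos hb0]
    have e2 : |(π * ρ0 + (1 - π) * ρ1 + β * V 0 lam) - (π * ρ0 + (1 - π) * ρ1 + β * W 0)|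
        = β * |V 0 lam - W 0| := by
      rw [show (π * ρ0 + (1 - π) * ρ1 + β * V 0 lam) - (π * ρ0 + (1 - π) * ρ1 + β * W 0)
        = β * (V 0 lam - W 0) by ring, abs_mul, abs_of_pos hb0]
    rw [e1, e2] at h1
    have b1 : β * |V (π + p * (1 - π)) lam - W (π + p * (1 - π))| ≤ β * M :=
      mul_le_mul_of_nonneg_left (hMmem _ (hfmem π hπ)) hb0.le
    have b2 : β * |V 0 lam - W 0| ≤ β * M :=
      mul_le_mul_of_nonneg_left (hMmem 0 (by norm_num)) hb0.le
    exact h1.trans (max_le b1 b2)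
  have hMle : M ≤ β * M := csSup_le hSne (by rintro _ ⟨π, hπ, rfl⟩; exact hkey π hπ)
  have hM0 : 0 ≤ M := le_trans (abs_nonneg _) (hMmem 0 (by norm_num))
  have hVW : ∀ π ∈ Set.Icc (0:ℝ) 1, V π lam = W π := by
    intro π hπ
    have hMz : M ≤ 0 := by nlinarith
    have := (hMmem π hπ).trans hMz
    have := abs_nonpos_iff.mp this
    linarith [sub_eq_zero.mp this, le_refl (V π lam)]
  -- the threshold
  set πT : ℝ := (ρ1 - lam) / ((1 - β) * (ρ1 - ρ0)) with hπT
  have hden : (0:ℝ) < (1 - β) * (ρ1 - ρ0) := mul_pos hb' hd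
  have hT0 : 0 ≤ πT := div_nonneg (by linarith) hden.le
  have hT1 : πT ≤ 1 := by
    rw [hπT, div_le_one hden]; nlinarith
  have hTmem : πT ∈ Set.Icc (0:ℝ) 1 := ⟨hT0, hT1⟩
  have hgT : g πT = c := by
    simp only [hg, hc, hπT]
    field_simp
    ring
  have hgc : ∀ x : ℝ, g x - c = (πT - x) * (ρ1 - ρ0) := by
    intro x
    rw [← hgT]; simp only [hg]; ring
  have hV0 : V 0 lam = ρ1 / (1 - β) := by
    rw [hVW 0 (by norm_num), hW0]
  refine ⟨πT, hTmem, ?_, ?_, ?_⟩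
  · -- indifference at πT
    have hfT := hfmem πT hTmem
    have hfge : πT ≤ πT + p * (1 - πT) := by nlinarith
    have hWfT : W (πT + p * (1 - πT)) = c := by
      apply max_eq_right
      have := hgc (πT + p * (1 - πT))
      nlinarith
    rw [hV0, hVW _ hfT, hWfT, hcβ]
    have : g πT = c := hgT
    simpa [hg] using this
  · -- uniqueness
    rintro π' ⟨h0', h1'⟩ heq
    have hf' := hfmem π' ⟨h0', h1'⟩
    rw [hV0, hVW _ hf'] at heq
    have heqg : g π' = lam + β * W (π' + p * (1 - π')) := heq
    rcases le_total (g (π' + p * (1 - π'))) c with hle | hge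
    · have hWf : W (π' + p * (1 - π')) = c := max_eq_right hle
      rw [hWf, hcβ] at heqg
      have h := hgc π'
      have hmul : (πT - π') * (ρ1 - ρ0) = 0 := by linarith
      rcases mul_eq_zero.mp hmul with h' | h'
      · linarith
      · linarith
    · have hWf : W (π' + p * (1 - π')) = g (π' + p * (1 - π')) := max_eq_left hge
      rw [hWf] at heqg
      have hlam' : lam ≤ (1 - β) * g (π' + p * (1 - π')) := by
        rw [hc, div_le_iff₀ hb'] at hge; linarith
      have hdiff : g π' - g (π' + p * (1 - π')) = p * (1 - π') * (ρ1 - ρ0) := by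
        simp only [hg]; ring
      -- lam - (1-β) g(fπ') = p (1-π')(ρ1-ρ0) ≥ 0 and ≤ 0
      have hE : lam - (1 - β) * g (π' + p * (1 - π')) = p * (1 - π') * (ρ1 - ρ0) := by
        linarith
      have hπ1 : π' = 1 := by
        by_contra hne
        have hlt : π' < 1 := lt_of_le_of_ne h1' hne
        have : 0 < p * (1 - π') * (ρ1 - ρ0) :=
          mul_pos (mul_pos hp0 (by linarith)) hd
        linarith
      subst hπ1
      have harg : (1:ℝ) + p * (1 - 1) = 1 := by ring
      rw [harg] at hE
      have hceq : c = g 1 := by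
        rw [hc, div_eq_iff hb'.ne']
        linear_combination hE
      have h1g := hgc 1
      rw [← hceq] at h1g
      have hmul : (πT - 1) * (ρ1 - ρ0) = 0 := by linarith
      rcases mul_eq_zero.mp hmul with h' | h'
      · linarith
      · linarith
  · -- threshold structure
    rintro π hπ
    obtain ⟨h0, h1⟩ := hπ
    have hπmem : π ∈ Set.Icc (0:ℝ) 1 := ⟨h0, h1⟩
    constructor
    · intro hle
      have hgπ : c ≤ g π := by
        have := hgc π; nlinarith
      rw [hVW π hπmem, hV0]
      have : W π = g π := max_eq_left hgπ
      rw [this]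
    · intro hge
      have hgπ : g π ≤ c := by
        have := hgc π; nlinarith
      have hfge : π ≤ π + p * (1 - π) := by nlinarith
      have hWf : W (π + p * (1 - π)) = c := by
        apply max_eq_right
        have := hgc (π + p * (1 - π))
        nlinarith
      rw [hVW π hπmem, hVW _ (hfmem π hπmem), hWf]
      have : W π = c := max_eq_right hgπ
      rw [this, hcβ]
end

section
/- Let λ ∈ ℝ and suppose V has the single-threshold structure with threshold π_T ∈ (0,1]: V(π,λ) = V1(π,λ) for all π ∈ [0,1] with π ≤ π_T and V(π,λ) = V0(π,λ) for all π ∈ [0,1] with π ≥ π_T. Let K := min{k ≥ 0 : (1−p)^k < π_T} (which is finite since π_T > 0). Then V0(1,λ) = λ·(1−β^K) / ((1−β^{K+1})·(1−β)) + β^K·(ρ1 + (ρ0−ρ1)·(1−p)^K) / (1−β^{K+1}). -/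
theorem stmt_13 (p ρ0 ρ1 β lam πT : ℝ)
    (hp0 : 0 < p) (hp1 : p < 1) (hr0 : 0 < ρ0) (hr01 : ρ0 < ρ1) (hr1 : ρ1 < 1)
    (hb0 : 0 < β) (hb1 : β < 1)
    (V : ℝ → ℝ → ℝ)
    (hVbd : ∀ lam : ℝ, ∃ C : ℝ, ∀ π ∈ Set.Icc (0:ℝ) 1, |V π lam| ≤ C)
    (hVeq : ∀ lam : ℝ, ∀ π ∈ Set.Icc (0:ℝ) 1,
      V π lam = max (lam + β * V ((1 - p) * π) lam)
        (π * ρ0 + (1 - π) * ρ1 + β * V 1 lam))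
    (hπT : πT ∈ Set.Ioc (0:ℝ) 1)
    (hthresh : ∀ π ∈ Set.Icc (0:ℝ) 1,
      (π ≤ πT → V π lam = π * ρ0 + (1 - π) * ρ1 + β * V 1 lam) ∧
      (πT ≤ π → V π lam = lam + β * V ((1 - p) * π) lam))
    (K : ℕ) (hK : K = sInf {k : ℕ | (1 - p) ^ k < πT}) :
    lam + β * V ((1 - p) * 1) lam =
      lam * (1 - β ^ K) / ((1 - β ^ (K + 1)) * (1 - β)) +
        β ^ K * (ρ1 + (ρ0 - ρ1) * (1 - p) ^ K) / (1 - β ^ (K + 1)) := by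
  have hq0 : (0:ℝ) < 1 - p := by linarith
  have hq1 : (1:ℝ) - p < 1 := by linarith
  have hqmem : ∀ k : ℕ, (1 - p) ^ k ∈ Set.Icc (0:ℝ) 1 :=
    fun k => ⟨pow_nonneg hq0.le k, pow_le_one₀ hq0.le hq1.le⟩
  have hS : {k : ℕ | (1 - p) ^ k < πT}.Nonempty := by
    obtain ⟨n, hn⟩ := exists_pow_lt_of_lt_one hπT.1 hq1
    exact ⟨n, hn⟩
  have hKmem : (1 - p) ^ K < πT := by rw [hK]; exact Nat.sInf_mem hS
  have hKlt : ∀ k, k < K → πT ≤ (1 - p) ^ k := by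
    intro k hk
    by_contra h
    push_neg at h
    have : K ≤ k := by rw [hK]; exact Nat.sInf_le h
    omega
  set W := V 1 lam with hW
  have step : ∀ k, k < K → V ((1 - p) ^ k) lam = lam + β * V ((1 - p) ^ (k + 1)) lam := by
    intro k hk
    have h := (hthresh ((1 - p) ^ k) (hqmem k)).2 (hKlt k hk)
    have e : (1 - p) * (1 - p) ^ k = (1 - p) ^ (k + 1) := by rw [pow_succ]; ring
    rw [h, e]
  have unroll : ∀ k, k ≤ K →
      W = (∑ i ∈ Finset.range k, β ^ i) * lam + β ^ k * V ((1 - p) ^ k) lam := by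
    intro k
    induction k with
    | zero => intro _; simp [hW]
    | succ n ih =>
      intro hn
      have hn' : n < K := by omega
      rw [ih hn'.le, step n hn', Finset.sum_range_succ]
      ring
  have hplay : V ((1 - p) ^ K) lam =
      (1 - p) ^ K * ρ0 + (1 - (1 - p) ^ K) * ρ1 + β * W :=
    (hthresh ((1 - p) ^ K) (hqmem K)).1 hKmem.le
  have heq : W = (∑ i ∈ Finset.range K, β ^ i) * lam +
      β ^ K * ((1 - p) ^ K * ρ0 + (1 - (1 - p) ^ K) * ρ1 + β * W) := by
    rw [← hplay]; exact unroll K le_rfl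
  have hgeom : (∑ i ∈ Finset.range K, β ^ i) = (β ^ K - 1) / (β - 1) :=
    geom_sum_eq (by linarith) K
  have hb : (1:ℝ) - β ≠ 0 := by linarith
  have hbK : (1:ℝ) - β ^ (K + 1) ≠ 0 := by
    have : β ^ (K + 1) < 1 := pow_lt_one₀ hb0.le hb1 (by omega)
    linarith
  have hV1 : W = lam + β * V ((1 - p) * 1) lam :=
    (hthresh 1 ⟨zero_le_one, le_rfl⟩).2 hπT.2
  rw [hgeom] at heq
  have hb' : β - 1 ≠ 0 := by linarith
  have key : W * ((1 - β ^ (K + 1)) * (1 - β)) =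
      lam * (1 - β ^ K) + β ^ K * (ρ1 + (ρ0 - ρ1) * (1 - p) ^ K) * (1 - β) := by
    field_simp at heq
    linear_combination -heq
  rw [← hV1]
  field_simp
  linear_combination key
end

section
/- The type-A arm is Whittle indexable on [λ_L, λ_H], where λ_L := ρ0 + β·p·(ρ0 − ρ1) and λ_H := ρ1: defining P(λ) := {π ∈ [0,1] : V1(π,λ) ≤ V0(π,λ)} (the set of beliefs at which not playing is optimal under subsidy λ), one has P(λ1) ⊆ P(λ2) whenever λ_L ≤ λ1 < λ2 ≤ λ_H. -/
theorem stmt_16 (p ρ0 ρ1 β : ℝ)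
    (hp0 : 0 < p) (hp1 : p < 1) (hr0 : 0 < ρ0) (hr01 : ρ0 < ρ1) (hr1 : ρ1 < 1)
    (hb0 : 0 < β) (hb1 : β < 1)
    (V : ℝ → ℝ → ℝ)
    (hVbd : ∀ lam : ℝ, ∃ C : ℝ, ∀ π ∈ Set.Icc (0:ℝ) 1, |V π lam| ≤ C)
    (hVeq : ∀ lam : ℝ, ∀ π ∈ Set.Icc (0:ℝ) 1,
      V π lam = max (lam + β * V ((1 - p) * π) lam)
        (π * ρ0 + (1 - π) * ρ1 + β * V 1 lam)) :
    ∀ lam1 lam2 : ℝ,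
      ρ0 + β * p * (ρ0 - ρ1) ≤ lam1 → lam1 < lam2 → lam2 ≤ ρ1 →
      {π : ℝ | π ∈ Set.Icc (0:ℝ) 1 ∧
          π * ρ0 + (1 - π) * ρ1 + β * V 1 lam1 ≤ lam1 + β * V ((1 - p) * π) lam1} ⊆
      {π : ℝ | π ∈ Set.Icc (0:ℝ) 1 ∧
          π * ρ0 + (1 - π) * ρ1 + β * V 1 lam2 ≤ lam2 + β * V ((1 - p) * π) lam2} := by
  intro lam1 lam2 _hL h12 _hH
  set d : ℝ := lam2 - lam1 with hd
  have hd0 : 0 < d := by simp [hd]; linarith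
  set Δ : ℝ → ℝ := fun x => V x lam2 - V x lam1 with hΔ
  set S : Set ℝ := Δ '' Set.Icc (0:ℝ) 1 with hS
  have h1mem : (1:ℝ) ∈ Set.Icc (0:ℝ) 1 := by constructor <;> norm_num
  have hne : S.Nonempty := ⟨Δ 1, 1, h1mem, rfl⟩
  obtain ⟨C1, hC1⟩ := hVbd lam1
  obtain ⟨C2, hC2⟩ := hVbd lam2
  have hbddA : BddAbove S := by
    refine ⟨C1 + C2, ?_⟩
    rintro y ⟨x, hx, rfl⟩
    have := hC1 x hx; have := hC2 x hx
    have h1 := abs_le.mp (hC1 x hx)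
    have h2 := abs_le.mp (hC2 x hx)
    simp only [hΔ]; linarith [h1.1, h1.2, h2.1, h2.2]
  have hbddB : BddBelow S := by
    refine ⟨-(C1 + C2), ?_⟩
    rintro y ⟨x, hx, rfl⟩
    have h1 := abs_le.mp (hC1 x hx)
    have h2 := abs_le.mp (hC2 x hx)
    simp only [hΔ]; linarith [h1.1, h1.2, h2.1, h2.2]
  set M : ℝ := sSup S with hM
  set m : ℝ := sInf S with hm
  have hMx : ∀ x ∈ Set.Icc (0:ℝ) 1, Δ x ≤ M := fun x hx => le_csSup hbddA ⟨x, hx, rfl⟩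
  have hmx : ∀ x ∈ Set.Icc (0:ℝ) 1, m ≤ Δ x := fun x hx => csInf_le hbddB ⟨x, hx, rfl⟩
  have hmem' : ∀ x ∈ Set.Icc (0:ℝ) 1, (1 - p) * x ∈ Set.Icc (0:ℝ) 1 := by
    intro x hx
    obtain ⟨hx0, hx1⟩ := hx
    constructor
    · nlinarith
    · nlinarith
  -- upper recursion : Δ x ≤ d + β * M
  have hup : ∀ x ∈ Set.Icc (0:ℝ) 1, Δ x ≤ d + β * M := by
    intro x hx
    have h1 := hVeq lam1 x hx
    have h2 := hVeq lam2 x hx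
    have hx' := hmem' x hx
    have hA : lam2 + β * V ((1 - p) * x) lam2 ≤
        (lam1 + β * V ((1 - p) * x) lam1) + (d + β * M) := by
      have := hMx _ hx'
      simp only [hΔ] at this
      nlinarith
    have hB : x * ρ0 + (1 - x) * ρ1 + β * V 1 lam2 ≤
        (x * ρ0 + (1 - x) * ρ1 + β * V 1 lam1) + (d + β * M) := by
      have := hMx _ h1mem
      simp only [hΔ] at this
      nlinarith
    have : V x lam2 ≤ max (lam1 + β * V ((1 - p) * x) lam1)
        (x * ρ0 + (1 - x) * ρ1 + β * V 1 lam1) + (d + β * M) := by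
      rw [h2]
      exact max_le (hA.trans (by gcongr; exact le_max_left _ _))
        (hB.trans (by gcongr; exact le_max_right _ _))
    simp only [hΔ]
    rw [h1]
    linarith [this]
  have hMd : M ≤ d + β * M := csSup_le hne (by rintro y ⟨x, hx, rfl⟩; exact hup x hx)
  have hM1 : Δ 1 ≤ M := hMx 1 h1mem
  -- lower recursion : min (d + β * m) (β * Δ 1) ≤ Δ x
  have hlow : ∀ x ∈ Set.Icc (0:ℝ) 1, min (d + β * m) (β * Δ 1) ≤ Δ x := by
    intro x hx
    have h1 := hVeq lam1 x hx
    have h2 := hVeq lam2 x hx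
    have hx' := hmem' x hx
    set c : ℝ := min (d + β * m) (β * Δ 1) with hc
    have hA : (lam1 + β * V ((1 - p) * x) lam1) + c ≤
        lam2 + β * V ((1 - p) * x) lam2 := by
      have h := hmx _ hx'
      have hcle : c ≤ d + β * m := min_le_left _ _
      simp only [hΔ] at h
      nlinarith
    have hB : (x * ρ0 + (1 - x) * ρ1 + β * V 1 lam1) + c ≤
        x * ρ0 + (1 - x) * ρ1 + β * V 1 lam2 := by
      have hcle : c ≤ β * Δ 1 := min_le_right _ _
      simp only [hΔ] at hcle
      linarith
    have : max (lam1 + β * V ((1 - p) * x) lam1)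
        (x * ρ0 + (1 - x) * ρ1 + β * V 1 lam1) + c ≤ V x lam2 := by
      rw [h2, ← max_add_add_right]
      exact max_le (hA.trans (le_max_left _ _)) (hB.trans (le_max_right _ _))
    simp only [hΔ]
    rw [h1]
    linarith [this]
  have hmlow : min (d + β * m) (β * Δ 1) ≤ m :=
    le_csInf hne (by rintro y ⟨x, hx, rfl⟩; exact hlow x hx)
  -- key : β * Δ 1 ≤ m
  have hkey : β * Δ 1 ≤ m := by
    rcases le_or_gt (β * Δ 1) (d + β * m) with h | h
    · have : min (d + β * m) (β * Δ 1) = β * Δ 1 := min_eq_right h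
      linarith [hmlow, this.symm.le, this.le]
    · have hcm : d + β * m ≤ m := by
        have : min (d + β * m) (β * Δ 1) = d + β * m := min_eq_left h.le
        linarith [hmlow]
      -- m ≥ d/(1-β), and Δ 1 ≤ M ≤ d/(1-β)
      have hb1' : (0:ℝ) < 1 - β := by linarith
      have hmM : M ≤ m := by nlinarith
      have hm0 : (0:ℝ) ≤ m := by nlinarith
      have h1 : β * Δ 1 ≤ β * M := mul_le_mul_of_nonneg_left hM1 hb0.le
      have h2 : β * M ≤ β * m := mul_le_mul_of_nonneg_left hmM hb0.le
      nlinarith [mul_nonneg hm0 hb1'.le]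
  -- final step
  rintro π ⟨hπ, hP1⟩
  refine ⟨hπ, ?_⟩
  have hπ' := hmem' π hπ
  have hΔπ' : β * Δ 1 ≤ Δ ((1 - p) * π) := hkey.trans (hmx _ hπ')
  have hMd' : β * (1 - β) * Δ 1 ≤ d := by
    have h1 : β * (1 - β) * Δ 1 ≤ β * (1 - β) * M :=
      mul_le_mul_of_nonneg_left hM1 (by nlinarith)
    nlinarith [mul_le_mul_of_nonneg_left hMd hb0.le]
  -- β * Δ 1 ≤ d + β * Δ ((1-p)π)
  have hfin : β * Δ 1 ≤ d + β * Δ ((1 - p) * π) := by nlinarith [hΔπ']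
  simp only [hΔ] at hfin
  linarith [hP1, hfin]
end

section
/- The type-B arm is Whittle indexable on [λ_L, λ_H], where λ_L := ρ1 + (1−β)·(ρ0 − ρ1) and λ_H := ρ1: defining P(λ) := {π ∈ [0,1] : V1(π,λ) ≤ V0(π,λ)} (the set of beliefs at which not playing is optimal under subsidy λ), one has P(λ1) ⊆ P(λ2) whenever λ_L ≤ λ1 < λ2 ≤ λ_H. -/
set_option maxHeartbeats 1000000 in
theorem stmt_17 (p ρ0 ρ1 β : ℝ)
    (hp0 : 0 < p) (hp1 : p < 1) (hr0 : 0 < ρ0) (hr01 : ρ0 < ρ1) (hr1 : ρ1 < 1)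
    (hb0 : 0 < β) (hb1 : β < 1)
    (V : ℝ → ℝ → ℝ)
    (hVbd : ∀ lam : ℝ, ∃ C : ℝ, ∀ π ∈ Set.Icc (0:ℝ) 1, |V π lam| ≤ C)
    (hVeq : ∀ lam : ℝ, ∀ π ∈ Set.Icc (0:ℝ) 1,
      V π lam = max (lam + β * V (π + p * (1 - π)) lam)
        (π * ρ0 + (1 - π) * ρ1 + β * V 0 lam)) :
    ∀ lam1 lam2 : ℝ,
      ρ1 + (1 - β) * (ρ0 - ρ1) ≤ lam1 → lam1 < lam2 → lam2 ≤ ρ1 →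
      {π : ℝ | π ∈ Set.Icc (0:ℝ) 1 ∧
          π * ρ0 + (1 - π) * ρ1 + β * V 0 lam1 ≤ lam1 + β * V (π + p * (1 - π)) lam1} ⊆
      {π : ℝ | π ∈ Set.Icc (0:ℝ) 1 ∧
          π * ρ0 + (1 - π) * ρ1 + β * V 0 lam2 ≤ lam2 + β * V (π + p * (1 - π)) lam2} := by
  have hb' : (0:ℝ) < 1 - β := by linarith
  set S : ℝ := ρ1 / (1 - β) with hSdef
  have hS : S * (1 - β) = ρ1 := div_mul_cancel₀ _ (ne_of_gt hb')
  have h0mem : (0:ℝ) ∈ Set.Icc (0:ℝ) 1 := Set.mem_Icc.mpr ⟨le_refl 0, by norm_num⟩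
  -- exact formula for V when lam ≤ ρ1
  have key : ∀ lam : ℝ, lam ≤ ρ1 → ∀ π ∈ Set.Icc (0:ℝ) 1,
      V π lam = max (π * ρ0 + (1 - π) * ρ1 + β * S) (lam / (1 - β)) := by
    intro lam hlam
    set T : ℝ := lam / (1 - β) with hTdef
    have hT : T * (1 - β) = lam := div_mul_cancel₀ _ (ne_of_gt hb')
    have hTS : T ≤ S := by
      rw [hTdef, hSdef]
      exact (div_le_div_iff_of_pos_right hb').mpr hlam
    set W : ℝ → ℝ := fun π => max (π * ρ0 + (1 - π) * ρ1 + β * S) T with hWdef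
    have hW0val : (0:ℝ) * ρ0 + (1 - (0:ℝ)) * ρ1 + β * S = S := by nlinarith
    have hW0 : W 0 = S := by
      simp only [hWdef]
      rw [hW0val, max_eq_left hTS]
    have hTfix : lam + β * T = T := by nlinarith
    -- W satisfies the Bellman fixed point
    have hWfix : ∀ π ∈ Set.Icc (0:ℝ) 1,
        W π = max (lam + β * W (π + p * (1 - π)))
          (π * ρ0 + (1 - π) * ρ1 + β * W 0) := by
      intro π hπ
      obtain ⟨hπ0, hπ1⟩ := hπ
      set q : ℝ := π + p * (1 - π) with hq
      have hπq : π ≤ q := by nlinarith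
      rw [hW0]
      have hmid : lam + β * (q * ρ0 + (1 - q) * ρ1 + β * S)
          ≤ max (π * ρ0 + (1 - π) * ρ1 + β * S) T := by
        rcases le_or_gt (lam + β * (q * ρ0 + (1 - q) * ρ1 + β * S))
            (π * ρ0 + (1 - π) * ρ1 + β * S) with h | h
        · exact le_trans h (le_max_left _ _)
        · refine le_trans ?_ (le_max_right _ _)
          nlinarith [mul_le_mul_of_nonneg_left hπq (mul_nonneg hb0.le (by linarith : (0:ℝ) ≤ ρ1 - ρ0)),
            mul_pos hb0 hb']
      show max (π * ρ0 + (1 - π) * ρ1 + β * S) T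
          = max (lam + β * max (q * ρ0 + (1 - q) * ρ1 + β * S) T)
            (π * ρ0 + (1 - π) * ρ1 + β * S)
      apply le_antisymm
      · apply max_le
        · exact le_max_right _ _
        · calc T = lam + β * T := hTfix.symm
            _ ≤ lam + β * max (q * ρ0 + (1 - q) * ρ1 + β * S) T := by
                have := le_max_right (q * ρ0 + (1 - q) * ρ1 + β * S) T
                nlinarith
            _ ≤ _ := le_max_left _ _
      · apply max_le
        · rcases max_cases (q * ρ0 + (1 - q) * ρ1 + β * S) T with ⟨he, _⟩ | ⟨he, _⟩
          · rw [he]; exact hmid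
          · rw [he, hTfix]; exact le_max_right _ _
        · exact le_max_left _ _
    -- uniqueness via contraction
    obtain ⟨C, hC⟩ := hVbd lam
    set E : ℝ := |ρ0| + |ρ1| + β * |S| + |T| with hEdef
    have hWbd : ∀ π ∈ Set.Icc (0:ℝ) 1, |W π| ≤ E := by
      intro π hπ
      obtain ⟨hπ0, hπ1⟩ := hπ
      have ha : |π| ≤ 1 := by rw [abs_of_nonneg hπ0]; exact hπ1
      have hbb : |1 - π| ≤ 1 := by rw [abs_of_nonneg (by linarith)]; linarith
      have h1 : |π * ρ0 + (1 - π) * ρ1 + β * S| ≤ |ρ0| + |ρ1| + β * |S| := by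
        calc |π * ρ0 + (1 - π) * ρ1 + β * S| ≤ |π * ρ0| + |(1 - π) * ρ1| + |β * S| :=
            abs_add_three _ _ _
          _ = |π| * |ρ0| + |1 - π| * |ρ1| + β * |S| := by
              rw [abs_mul, abs_mul, abs_mul, abs_of_nonneg hb0.le]
          _ ≤ |ρ0| + |ρ1| + β * |S| := by
              nlinarith [abs_nonneg ρ0, abs_nonneg ρ1, abs_nonneg π, abs_nonneg (1 - π),
                mul_le_mul_of_nonneg_right ha (abs_nonneg ρ0),
                mul_le_mul_of_nonneg_right hbb (abs_nonneg ρ1)]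
      have := abs_max_le_max_abs_abs (a := π * ρ0 + (1 - π) * ρ1 + β * S) (b := T)
      rw [hEdef]
      calc |W π| ≤ max (|π * ρ0 + (1 - π) * ρ1 + β * S|) (|T|) := this
        _ ≤ |ρ0| + |ρ1| + β * |S| + |T| := by
            apply max_le
            · linarith [abs_nonneg T, h1]
            · linarith [abs_nonneg ρ0, abs_nonneg ρ1, mul_nonneg hb0.le (abs_nonneg S)]
    have hqmem : ∀ π ∈ Set.Icc (0:ℝ) 1, π + p * (1 - π) ∈ Set.Icc (0:ℝ) 1 := by
      intro π hπ
      obtain ⟨hπ0, hπ1⟩ := hπ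
      have e1 : (0:ℝ) ≤ p * (1 - π) := mul_nonneg hp0.le (by linarith)
      have e2 : (0:ℝ) ≤ (1 - p) * (1 - π) := mul_nonneg (by linarith) (by linarith)
      exact Set.mem_Icc.mpr ⟨by linarith, by nlinarith⟩
    have hD : ∀ n : ℕ, ∀ π ∈ Set.Icc (0:ℝ) 1, |V π lam - W π| ≤ β ^ n * (C + E) := by
      intro n
      induction n with
      | zero =>
        intro π hπ
        rw [pow_zero, one_mul, abs_sub_le_iff]
        have h1 := abs_le.mp (hC π hπ)
        have h2 := abs_le.mp (hWbd π hπ)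
        constructor <;> linarith [h1.1, h1.2, h2.1, h2.2]
      | succ n ih =>
        intro π hπ
        rw [hVeq lam π hπ, hWfix π hπ]
        have hq := hqmem π hπ
        have k1 : |(lam + β * V (π + p * (1 - π)) lam) - (lam + β * W (π + p * (1 - π)))|
            ≤ β ^ (n + 1) * (C + E) := by
          have : (lam + β * V (π + p * (1 - π)) lam) - (lam + β * W (π + p * (1 - π)))
              = β * (V (π + p * (1 - π)) lam - W (π + p * (1 - π))) := by ring
          rw [this, abs_mul, abs_of_nonneg hb0.le, pow_succ]
          calc β * |V (π + p * (1 - π)) lam - W (π + p * (1 - π))|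
              ≤ β * (β ^ n * (C + E)) := by
                exact mul_le_mul_of_nonneg_left (ih _ hq) hb0.le
            _ = β ^ n * β * (C + E) := by ring
        have k2 : |(π * ρ0 + (1 - π) * ρ1 + β * V 0 lam) - (π * ρ0 + (1 - π) * ρ1 + β * W 0)|
            ≤ β ^ (n + 1) * (C + E) := by
          have : (π * ρ0 + (1 - π) * ρ1 + β * V 0 lam) - (π * ρ0 + (1 - π) * ρ1 + β * W 0)
              = β * (V 0 lam - W 0) := by ring
          rw [this, abs_mul, abs_of_nonneg hb0.le, pow_succ]
          calc β * |V 0 lam - W 0| ≤ β * (β ^ n * (C + E)) :=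
              mul_le_mul_of_nonneg_left (ih _ h0mem) hb0.le
            _ = β ^ n * β * (C + E) := by ring
        calc _ ≤ max (|(lam + β * V (π + p * (1 - π)) lam) - (lam + β * W (π + p * (1 - π)))|)
              (|(π * ρ0 + (1 - π) * ρ1 + β * V 0 lam) - (π * ρ0 + (1 - π) * ρ1 + β * W 0)|) :=
            abs_max_sub_max_le_max _ _ _ _
          _ ≤ β ^ (n + 1) * (C + E) := max_le k1 k2
    intro π hπ
    have hlim : Filter.Tendsto (fun n : ℕ => β ^ n * (C + E)) Filter.atTop (nhds 0) := by
      have := (tendsto_pow_atTop_nhds_zero_of_lt_one hb0.le hb1).mul_const (C + E)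
      simpa using this
    have : |V π lam - W π| ≤ 0 := ge_of_tendsto' hlim (fun n => hD n π hπ)
    have := abs_nonpos_iff.mp this
    have := sub_eq_zero.mp this
    simpa [hWdef] using this
  -- main argument: monotonicity in lam of the passive condition
  intro lam1 lam2 hL h12 hH π hmem
  obtain ⟨hπIcc, hcond⟩ := hmem
  have hlam1 : lam1 ≤ ρ1 := by linarith
  obtain ⟨hπ0, hπ1⟩ := hπIcc
  have e1 : (0:ℝ) ≤ p * (1 - π) := mul_nonneg hp0.le (by linarith)
  have e2 : (0:ℝ) ≤ (1 - p) * (1 - π) := mul_nonneg (by linarith) (by linarith)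
  have hqmem : π + p * (1 - π) ∈ Set.Icc (0:ℝ) 1 := Set.mem_Icc.mpr ⟨by linarith, by nlinarith⟩
  have hV0 : ∀ lam : ℝ, lam ≤ ρ1 → V 0 lam = S := by
    intro lam hlam
    rw [key lam hlam 0 h0mem]
    have h1 : (0:ℝ) * ρ0 + (1 - (0:ℝ)) * ρ1 + β * S = S := by nlinarith
    rw [h1]
    exact max_eq_left ((div_le_div_iff_of_pos_right hb').mpr hlam)
  rw [hV0 lam1 hlam1, key lam1 hlam1 _ hqmem] at hcond
  refine ⟨⟨hπ0, hπ1⟩, ?_⟩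
  rw [hV0 lam2 hH, key lam2 hH _ hqmem]
  calc π * ρ0 + (1 - π) * ρ1 + β * S
      ≤ lam1 + β * max ((π + p * (1 - π)) * ρ0 + (1 - (π + p * (1 - π))) * ρ1 + β * S)
        (lam1 / (1 - β)) := hcond
    _ ≤ lam2 + β * max ((π + p * (1 - π)) * ρ0 + (1 - (π + p * (1 - π))) * ρ1 + β * S)
        (lam2 / (1 - β)) := by
        have hmax : max ((π + p * (1 - π)) * ρ0 + (1 - (π + p * (1 - π))) * ρ1 + β * S)
            (lam1 / (1 - β)) ≤ max ((π + p * (1 - π)) * ρ0 + (1 - (π + p * (1 - π))) * ρ1 + β * S)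
            (lam2 / (1 - β)) :=
          max_le_max le_rfl ((div_le_div_iff_of_pos_right hb').mpr h12.le)
        nlinarith
end

section
/- For every π ∈ (0,1], the Whittle index W(π) := inf{λ ∈ ℝ : V1(π,λ) ≤ V0(π,λ)} of the type-B arm equals ρ1 + (1−β)·(ρ0 − ρ1)·π. -/
open Set

private lemma Tmem' (p : ℝ) (hp0 : 0 < p) (hp1 : p < 1) {π : ℝ} (hπ : π ∈ Icc (0:ℝ) 1) :
    π + p * (1 - π) ∈ Icc (0:ℝ) 1 := by
  obtain ⟨h0, h1⟩ := hπ
  constructor <;> nlinarith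

private lemma bellman_unique' (p β lam : ℝ) (r : ℝ → ℝ) (hp0 : 0 < p) (hp1 : p < 1)
    (hb0 : 0 < β) (hb1 : β < 1)
    (f g : ℝ → ℝ)
    (Cf : ℝ) (hfbd : ∀ π ∈ Icc (0:ℝ) 1, |f π| ≤ Cf)
    (Cg : ℝ) (hgbd : ∀ π ∈ Icc (0:ℝ) 1, |g π| ≤ Cg)
    (hf : ∀ π ∈ Icc (0:ℝ) 1, f π = max (lam + β * f (π + p*(1-π))) (r π + β * f 0))
    (hg : ∀ π ∈ Icc (0:ℝ) 1, g π = max (lam + β * g (π + p*(1-π))) (r π + β * g 0)) :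
    ∀ π ∈ Icc (0:ℝ) 1, f π = g π := by
  have h0mem : (0:ℝ) ∈ Icc (0:ℝ) 1 := ⟨le_refl 0, by norm_num⟩
  have key : ∀ n : ℕ, ∀ π ∈ Icc (0:ℝ) 1, |f π - g π| ≤ β ^ n * (Cf + Cg) := by
    intro n
    induction n with
    | zero =>
      intro π hπ
      have h1 := hfbd π hπ
      have h2 := hgbd π hπ
      have : |f π - g π| ≤ |f π| + |g π| := abs_sub _ _
      simpa using this.trans (add_le_add h1 h2)
    | succ n ih =>
      intro π hπ
      have hT := Tmem' p hp0 hp1 hπ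
      have h1 := ih _ hT
      have h2 := ih 0 h0mem
      rw [hf π hπ, hg π hπ]
      have hmax := abs_max_sub_max_le_max (lam + β * f (π + p*(1-π))) (r π + β * f 0)
        (lam + β * g (π + p*(1-π))) (r π + β * g 0)
      have e1 : |lam + β * f (π + p*(1-π)) - (lam + β * g (π + p*(1-π)))|
          = β * |f (π + p*(1-π)) - g (π + p*(1-π))| := by
        rw [show lam + β * f (π + p*(1-π)) - (lam + β * g (π + p*(1-π)))
            = β * (f (π + p*(1-π)) - g (π + p*(1-π))) from by ring, abs_mul, abs_of_pos hb0]
      have e2 : |r π + β * f 0 - (r π + β * g 0)| = β * |f 0 - g 0| := by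
        rw [show r π + β * f 0 - (r π + β * g 0) = β * (f 0 - g 0) from by ring,
          abs_mul, abs_of_pos hb0]
      rw [e1, e2] at hmax
      have b1 : β * |f (π + p*(1-π)) - g (π + p*(1-π))| ≤ β * (β ^ n * (Cf + Cg)) :=
        mul_le_mul_of_nonneg_left h1 hb0.le
      have b2 : β * |f 0 - g 0| ≤ β * (β ^ n * (Cf + Cg)) :=
        mul_le_mul_of_nonneg_left h2 hb0.le
      calc |max (lam + β * f (π + p*(1-π))) (r π + β * f 0)
            - max (lam + β * g (π + p*(1-π))) (r π + β * g 0)|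
          ≤ max (β * |f (π + p*(1-π)) - g (π + p*(1-π))|) (β * |f 0 - g 0|) := hmax
        _ ≤ β * (β ^ n * (Cf + Cg)) := max_le b1 b2
        _ = β ^ (n+1) * (Cf + Cg) := by ring
  intro π hπ
  have htend : Filter.Tendsto (fun n : ℕ => β ^ n * (Cf + Cg)) Filter.atTop (nhds 0) := by
    have := (tendsto_pow_atTop_nhds_zero_of_lt_one hb0.le hb1).mul_const (Cf + Cg)
    simpa using this
  have hle : |f π - g π| ≤ 0 := ge_of_tendsto' htend (fun n => key n π hπ)
  have hnn := abs_nonneg (f π - g π)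
  have : |f π - g π| = 0 := le_antisymm hle hnn
  linarith [sub_eq_zero.mp (abs_eq_zero.mp this)]

private noncomputable def gfun (ρ0 ρ1 β lam π : ℝ) : ℝ :=
  if π ≤ (ρ1 - lam) / ((1 - β) * (ρ1 - ρ0)) then
    π * ρ0 + (1 - π) * ρ1 + β * (ρ1 / (1 - β))
  else lam / (1 - β)

private lemma gfun_bd (ρ0 ρ1 β lam : ℝ) (hr0 : 0 < ρ0) (hr01 : ρ0 < ρ1)
    (hb0 : 0 < β) (hb1 : β < 1) :
    ∀ π ∈ Icc (0:ℝ) 1, |gfun ρ0 ρ1 β lam π| ≤ ρ1 + β * (ρ1 / (1 - β)) + |lam| / (1 - β) := by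
  intro π hπ
  obtain ⟨h0, h1⟩ := hπ
  have h1β : (0:ℝ) < 1 - β := by linarith
  have hA : 0 < ρ1 / (1 - β) := div_pos (by linarith) h1β
  have hL : |lam / (1 - β)| = |lam| / (1 - β) := by
    rw [abs_div, abs_of_pos h1β]
  have hLnn : (0:ℝ) ≤ |lam| / (1 - β) := div_nonneg (abs_nonneg _) h1β.le
  unfold gfun
  split_ifs with h
  · rw [abs_le]
    constructor <;> nlinarith
  · rw [hL]
    nlinarith [hA]

private lemma gfun_bellman (p ρ0 ρ1 β lam : ℝ) (hp0 : 0 < p) (hp1 : p < 1)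
    (hr01 : ρ0 < ρ1) (hb0 : 0 < β) (hb1 : β < 1) :
    ∀ π ∈ Icc (0:ℝ) 1,
      gfun ρ0 ρ1 β lam π = max (lam + β * gfun ρ0 ρ1 β lam (π + p * (1 - π)))
        (π * ρ0 + (1 - π) * ρ1 + β * gfun ρ0 ρ1 β lam 0) := by
  intro π hπ
  obtain ⟨h0, h1⟩ := hπ
  have h1β : (0:ℝ) < 1 - β := by linarith
  have hd : (0:ℝ) < (1 - β) * (ρ1 - ρ0) := by nlinarith
  have hT0 : π ≤ π + p * (1 - π) := by nlinarith
  have hT1 : π + p * (1 - π) ≤ 1 := by nlinarith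
  unfold gfun
  generalize hπs' : (ρ1 - lam) / ((1 - β) * (ρ1 - ρ0)) = πs
  generalize hA' : ρ1 / (1 - β) = A
  generalize hL' : lam / (1 - β) = L
  have hπs : (1 - β) * (ρ1 - ρ0) * πs = ρ1 - lam := by
    rw [← hπs', mul_comm]; exact div_mul_cancel₀ _ hd.ne'
  have hA : (1 - β) * A = ρ1 := by
    rw [← hA', mul_comm]; exact div_mul_cancel₀ _ (by linarith : (1:ℝ) - β ≠ 0)
  have hL : (1 - β) * L = lam := by
    rw [← hL', mul_comm]; exact div_mul_cancel₀ _ (by linarith : (1:ℝ) - β ≠ 0)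
  have hA2 : β ^ 2 * ((1 - β) * A) = β ^ 2 * ρ1 := by rw [hA]
  have hL2 : β * ((1 - β) * L) = β * lam := by rw [hL]
  rcases le_or_gt π πs with h | h
  · have hz : (0 : ℝ) ≤ πs := le_trans h0 h
    have hmul : (1 - β) * (ρ1 - ρ0) * π ≤ ρ1 - lam := by
      calc (1 - β) * (ρ1 - ρ0) * π ≤ (1 - β) * (ρ1 - ρ0) * πs :=
            mul_le_mul_of_nonneg_left h hd.le
        _ = ρ1 - lam := hπs
    rw [if_pos h, if_pos hz]
    rcases le_or_gt (π + p * (1 - π)) πs with hT | hT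
    · rw [if_pos hT, max_eq_right ?ineq]
      · linear_combination β * hA
      case ineq =>
        nlinarith [hmul, mul_nonneg (mul_nonneg (mul_nonneg
          (by linarith : (0:ℝ) ≤ ρ1 - ρ0) hb0.le) hp0.le) (by linarith : (0:ℝ) ≤ 1 - π)]
    · rw [if_neg (not_le.mpr hT), max_eq_right ?ineq2]
      · linear_combination β * hA
      case ineq2 =>
        refine le_of_mul_le_mul_left ?_ h1β
        nlinarith [hmul, hL2, hA2]
  · have hT' : ¬ (π + p * (1 - π) ≤ πs) := not_le.mpr (lt_of_lt_of_le h hT0)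
    rw [if_neg (not_le.mpr h), if_neg hT']
    rcases le_or_gt 0 πs with hz | hz
    · rw [if_pos hz, max_eq_left ?ineq3]
      · linear_combination hL
      case ineq3 =>
        have hmul : ρ1 - lam ≤ (1 - β) * (ρ1 - ρ0) * π := by
          calc ρ1 - lam = (1 - β) * (ρ1 - ρ0) * πs := hπs.symm
            _ ≤ (1 - β) * (ρ1 - ρ0) * π := mul_le_mul_of_nonneg_left h.le hd.le
        refine le_of_mul_le_mul_left ?_ h1β
        nlinarith [hmul, hL2, hA2]
    · rw [if_neg (not_le.mpr hz), max_eq_left ?ineq4]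
      · linear_combination hL
      case ineq4 =>
        have hlam : ρ1 - lam < 0 := by
          rw [← hπs]; exact mul_neg_of_pos_of_neg hd hz
        nlinarith [mul_nonneg (by linarith : (0:ℝ) ≤ ρ1 - ρ0) h0]

set_option maxHeartbeats 1000000 in
theorem stmt_18 (p ρ0 ρ1 β : ℝ)
    (hp0 : 0 < p) (hp1 : p < 1) (hr0 : 0 < ρ0) (hr01 : ρ0 < ρ1) (hr1 : ρ1 < 1)
    (hb0 : 0 < β) (hb1 : β < 1)
    (V : ℝ → ℝ → ℝ)
    (hVbd : ∀ lam : ℝ, ∃ C : ℝ, ∀ π ∈ Set.Icc (0:ℝ) 1, |V π lam| ≤ C)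
    (hVeq : ∀ lam : ℝ, ∀ π ∈ Set.Icc (0:ℝ) 1,
      V π lam = max (lam + β * V (π + p * (1 - π)) lam)
        (π * ρ0 + (1 - π) * ρ1 + β * V 0 lam)) :
    ∀ π ∈ Set.Ioc (0:ℝ) 1,
      sInf {lam : ℝ |
          π * ρ0 + (1 - π) * ρ1 + β * V 0 lam ≤ lam + β * V (π + p * (1 - π)) lam} =
        ρ1 + (1 - β) * (ρ0 - ρ1) * π := by
  intro π hπ
  obtain ⟨hπ0, hπ1⟩ := hπ
  have h1β : (0:ℝ) < 1 - β := by linarith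
  have hd : (0:ℝ) < (1 - β) * (ρ1 - ρ0) := by nlinarith
  have hπmem : π ∈ Icc (0:ℝ) 1 := ⟨hπ0.le, hπ1⟩
  have h0mem : (0:ℝ) ∈ Icc (0:ℝ) 1 := ⟨le_refl 0, by norm_num⟩
  have hTmem : π + p * (1 - π) ∈ Icc (0:ℝ) 1 := Tmem' p hp0 hp1 hπmem
  have hT0 : π ≤ π + p * (1 - π) := by nlinarith
  have hset : {lam : ℝ |
      π * ρ0 + (1 - π) * ρ1 + β * V 0 lam ≤ lam + β * V (π + p * (1 - π)) lam}
      = Ici (ρ1 + (1 - β) * (ρ0 - ρ1) * π) := by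
    ext lam
    obtain ⟨Cf, hCf⟩ := hVbd lam
    have hVg : ∀ x ∈ Icc (0:ℝ) 1, V x lam = gfun ρ0 ρ1 β lam x := by
      refine bellman_unique' p β lam (fun x => x * ρ0 + (1 - x) * ρ1) hp0 hp1 hb0 hb1
        (fun x => V x lam) (gfun ρ0 ρ1 β lam) Cf hCf
        (ρ1 + β * (ρ1 / (1 - β)) + |lam| / (1 - β)) (gfun_bd ρ0 ρ1 β lam hr0 hr01 hb0 hb1)
        (fun x hx => hVeq lam x hx)
        (fun x hx => gfun_bellman p ρ0 ρ1 β lam hp0 hp1 hr01 hb0 hb1 x hx)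
    simp only [mem_setOf_eq, mem_Ici, hVg 0 h0mem, hVg _ hTmem]
    unfold gfun
    generalize hπs' : (ρ1 - lam) / ((1 - β) * (ρ1 - ρ0)) = πs
    generalize hA' : ρ1 / (1 - β) = A
    generalize hL' : lam / (1 - β) = L
    have hπs : (1 - β) * (ρ1 - ρ0) * πs = ρ1 - lam := by
      rw [← hπs', mul_comm]; exact div_mul_cancel₀ _ hd.ne'
    have hA : (1 - β) * A = ρ1 := by
      rw [← hA', mul_comm]; exact div_mul_cancel₀ _ (by linarith : (1:ℝ) - β ≠ 0)
    have hL : (1 - β) * L = lam := by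
      rw [← hL', mul_comm]; exact div_mul_cancel₀ _ (by linarith : (1:ℝ) - β ≠ 0)
    have hA2 : β ^ 2 * ((1 - β) * A) = β ^ 2 * ρ1 := by rw [hA]
    have hL2 : β * ((1 - β) * L) = β * lam := by rw [hL]
    rcases le_or_gt 0 πs with hz | hz
    · rw [if_pos hz]
      rcases le_or_gt (π + p * (1 - π)) πs with hT | hT
      · rw [if_pos hT]
        constructor
        · intro hC
          nlinarith [hC, mul_nonneg (mul_nonneg (mul_nonneg
            (by linarith : (0:ℝ) ≤ ρ1 - ρ0) hb0.le) hp0.le) (by linarith : (0:ℝ) ≤ 1 - π)]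
        · intro hlam
          have hmul : (1 - β) * (ρ1 - ρ0) * πs ≤ (1 - β) * (ρ1 - ρ0) * π := by
            rw [hπs]; nlinarith [hlam]
          have hπsle : πs ≤ π := le_of_mul_le_mul_left hmul hd
          have hπeq : π = 1 := by nlinarith [le_trans hT0 (le_trans hT hπsle)]
          subst hπeq
          nlinarith [hlam]
      · rw [if_neg (not_le.mpr hT)]
        constructor
        · intro hC
          linarith [mul_le_mul_of_nonneg_left hC h1β.le, hA2, hL2]
        · intro hlam
          refine le_of_mul_le_mul_left ?_ h1β
          nlinarith [hlam, hA2, hL2]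
    · have hT' : ¬ (π + p * (1 - π) ≤ πs) :=
        not_le.mpr (lt_of_lt_of_le hz (le_trans hπ0.le hT0))
      rw [if_neg (not_le.mpr hz), if_neg hT']
      have hlamρ1 : ρ1 - lam < 0 := by
        rw [← hπs]; exact mul_neg_of_pos_of_neg hd hz
      constructor
      · intro _
        nlinarith [mul_nonneg (mul_nonneg h1β.le (by linarith : (0:ℝ) ≤ ρ1 - ρ0)) hπ0.le]
      · intro _
        nlinarith [mul_nonneg (by linarith : (0:ℝ) ≤ ρ1 - ρ0) hπ0.le]
  rw [hset, csInf_Ici]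
end

section
/- For every π ∈ (0,1], letting K := min{k ≥ 0 : (1−p)^k < π}, the Whittle index W(π) := inf{λ ∈ ℝ : V1(π,λ) ≤ V0(π,λ)} of the type-A arm equals ρ1 + β^{K+1}·(ρ0 − ρ1)·(1−p)^K + ((ρ0 − ρ1)/(1−β))·(1 − β^{K+1})·(1 − β·(1−p))·π. -/
set_option maxHeartbeats 1000000 in
theorem stmt_19 (p ρ0 ρ1 β : ℝ)
    (hp0 : 0 < p) (hp1 : p < 1) (hr0 : 0 < ρ0) (hr01 : ρ0 < ρ1) (hr1 : ρ1 < 1)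
    (hb0 : 0 < β) (hb1 : β < 1)
    (V : ℝ → ℝ → ℝ)
    (hVbd : ∀ lam : ℝ, ∃ C : ℝ, ∀ π ∈ Set.Icc (0:ℝ) 1, |V π lam| ≤ C)
    (hVeq : ∀ lam : ℝ, ∀ π ∈ Set.Icc (0:ℝ) 1,
      V π lam = max (lam + β * V ((1 - p) * π) lam)
        (π * ρ0 + (1 - π) * ρ1 + β * V 1 lam)) :
    ∀ π ∈ Set.Ioc (0:ℝ) 1, ∀ K : ℕ, K = sInf {k : ℕ | (1 - p) ^ k < π} →
      sInf {lam : ℝ |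
          π * ρ0 + (1 - π) * ρ1 + β * V 1 lam ≤ lam + β * V ((1 - p) * π) lam} =
        ρ1 + β ^ (K + 1) * (ρ0 - ρ1) * (1 - p) ^ K +
          ((ρ0 - ρ1) / (1 - β)) * (1 - β ^ (K + 1)) * (1 - β * (1 - p)) * π := by
  intro π hπ K hK
  obtain ⟨hπ0, hπ1⟩ := hπ
  obtain ⟨q, hq⟩ : ∃ x : ℝ, x = 1 - p := ⟨_, rfl⟩
  rw [show (1:ℝ) - p = q from hq.symm] at hVeq hK ⊢
  have hq0 : 0 < q := by rw [hq]; linarith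
  have hq1 : q < 1 := by rw [hq]; linarith
  clear hq
  have hd : 0 < ρ1 - ρ0 := by linarith
  have hb1' : (0:ℝ) < 1 - β := by linarith
  have hbq : β * q < 1 := by nlinarith
  have hqmem : ∀ j : ℕ, q ^ j ∈ Set.Icc (0:ℝ) 1 :=
    fun j => ⟨pow_nonneg hq0.le j, pow_le_one₀ hq0.le hq1.le⟩
  have hqπmem : ∀ j : ℕ, q ^ j * π ∈ Set.Icc (0:ℝ) 1 := by
    intro j
    constructor
    · positivity
    · nlinarith [pow_le_one₀ hq0.le hq1.le (n := j), pow_nonneg hq0.le j]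
  -- K facts
  have hKne : {k : ℕ | q ^ k < π}.Nonempty := by
    obtain ⟨n, hn⟩ := exists_pow_lt_of_lt_one hπ0 hq1
    exact ⟨n, hn⟩
  have hKmem : q ^ K < π := by rw [hK]; exact Nat.sInf_mem hKne
  have hKleast : ∀ j, j < K → π ≤ q ^ j := by
    intro j hj
    by_contra h
    push_neg at h
    have h2 : K ≤ j := hK ▸ Nat.sInf_le h
    omega
  have hK1 : 1 ≤ K := by
    rcases Nat.eq_zero_or_pos K with h | h
    · exfalso; rw [h, pow_zero] at hKmem; linarith
    · exact h
  have hbK : β ^ (K + 1) < 1 := pow_lt_one₀ hb0.le hb1 (by omega)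
  have hbK' : (0:ℝ) < 1 - β ^ (K + 1) := by linarith
  obtain ⟨W0, hW0⟩ : ∃ x : ℝ, x = ρ1 + β ^ (K + 1) * (ρ0 - ρ1) * q ^ K +
      ((ρ0 - ρ1) / (1 - β)) * (1 - β ^ (K + 1)) * (1 - β * q) * π := ⟨_, rfl⟩
  rw [show ρ1 + β ^ (K + 1) * (ρ0 - ρ1) * q ^ K +
      ((ρ0 - ρ1) / (1 - β)) * (1 - β ^ (K + 1)) * (1 - β * q) * π = W0 from hW0.symm]
  obtain ⟨cK, hcK⟩ : ∃ x : ℝ, x = q ^ K * ρ0 + (1 - q ^ K) * ρ1 := ⟨_, rfl⟩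
  obtain ⟨A, hA⟩ : ∃ A : ℝ → ℝ,
      A = fun lam => (lam * (1 - β ^ K) / (1 - β) + β ^ K * cK) / (1 - β ^ (K + 1)) :=
    ⟨_, rfl⟩
  -- Key algebraic identity
  have hid : ∀ lam : ℝ,
      (1 - β) * ρ1 - (ρ1 - ρ0) * π * (1 - β * q) - lam + β * (1 - β) * A lam
        = (1 - β) * (W0 - lam) / (1 - β ^ (K + 1)) := by
    intro lam
    rw [hA, hW0, hcK]
    field_simp
    ring
  have key_lb : ∀ lam : ℝ, A lam ≤ V 1 lam := by
    intro lam
    have ha : ∀ j : ℕ, V (q ^ j) lam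
        = max (lam + β * V (q ^ (j + 1)) lam)
          (q ^ j * ρ0 + (1 - q ^ j) * ρ1 + β * V 1 lam) := by
      intro j
      have h := hVeq lam (q ^ j) (hqmem j)
      rw [show q * q ^ j = q ^ (j + 1) by ring] at h
      exact h
    have hchain : ∀ k : ℕ, lam * (1 - β ^ k) / (1 - β) + β ^ k * V (q ^ k) lam ≤ V 1 lam := by
      intro k
      induction k with
      | zero => simp
      | succ n ih =>
        have h1 : lam + β * V (q ^ (n + 1)) lam ≤ V (q ^ n) lam := by
          rw [ha n]; exact le_max_left _ _
        have hmul : β ^ n * (lam + β * V (q ^ (n + 1)) lam) ≤ β ^ n * V (q ^ n) lam :=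
          mul_le_mul_of_nonneg_left h1 (by positivity)
        have hsplit : lam * (1 - β ^ (n + 1)) / (1 - β)
            = lam * (1 - β ^ n) / (1 - β) + β ^ n * lam := by
          field_simp; ring
        calc lam * (1 - β ^ (n + 1)) / (1 - β) + β ^ (n + 1) * V (q ^ (n + 1)) lam
            = lam * (1 - β ^ n) / (1 - β) + β ^ n * (lam + β * V (q ^ (n + 1)) lam) := by
              rw [hsplit]; ring
          _ ≤ lam * (1 - β ^ n) / (1 - β) + β ^ n * V (q ^ n) lam := by linarith
          _ ≤ V 1 lam := ih
    have hK2 : cK + β * V 1 lam ≤ V (q ^ K) lam := by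
      rw [ha K, hcK]; exact le_max_right _ _
    have h2' : β ^ K * cK + β ^ (K + 1) * V 1 lam ≤ β ^ K * V (q ^ K) lam := by
      have h := mul_le_mul_of_nonneg_left hK2 (pow_nonneg hb0.le K)
      calc β ^ K * cK + β ^ (K + 1) * V 1 lam = β ^ K * (cK + β * V 1 lam) := by
            rw [pow_succ]; ring
        _ ≤ β ^ K * V (q ^ K) lam := h
    have hnum : lam * (1 - β ^ K) / (1 - β) + β ^ K * cK + β ^ (K + 1) * V 1 lam ≤ V 1 lam := by
      have := hchain K
      linarith
    rw [hA]
    simp only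
    rw [div_le_iff₀ hbK']
    linarith

  have hlb : ∀ lam : ℝ,
      π * ρ0 + (1 - π) * ρ1 + β * V 1 lam ≤ lam + β * V (q * π) lam → W0 ≤ lam := by
    intro lam hmem
    by_contra hlt
    push_neg at hlt
    obtain ⟨δ, hδdef⟩ : ∃ δ : ℝ, δ = (1 - β) * (W0 - lam) / (1 - β ^ (K + 1)) := ⟨_, rfl⟩
    have hδ : 0 < δ := by
      rw [hδdef]
      apply div_pos _ hbK'
      nlinarith
    obtain ⟨C0, hC0⟩ := hVbd lam
    have hC0nn : 0 ≤ C0 := le_trans (abs_nonneg _) (hC0 1 ⟨zero_le_one, le_refl 1⟩)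
    have hwB : ∀ j : ℕ, V (q ^ j * π) lam
        = max (lam + β * V (q ^ (j + 1) * π) lam)
          (q ^ j * π * ρ0 + (1 - q ^ j * π) * ρ1 + β * V 1 lam) := by
      intro j
      have h := hVeq lam (q ^ j * π) (hqπmem j)
      rw [show q * (q ^ j * π) = q ^ (j + 1) * π by ring] at h
      exact h
    -- bracket lower bound
    have hBt : ∀ j : ℕ, δ ≤ (q ^ j * π * ρ0 + (1 - q ^ j * π) * ρ1)
        - β * (q ^ (j + 1) * π * ρ0 + (1 - q ^ (j + 1) * π) * ρ1)
        - lam + β * (1 - β) * V 1 lam := by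
      intro j
      have hqj1 : q ^ j ≤ 1 := pow_le_one₀ hq0.le hq1.le
      have hqj : q ^ j * π ≤ π := mul_le_of_le_one_left hπ0.le hqj1
      have hrew : (q ^ j * π * ρ0 + (1 - q ^ j * π) * ρ1)
          - β * (q ^ (j + 1) * π * ρ0 + (1 - q ^ (j + 1) * π) * ρ1)
          = (1 - β) * ρ1 - (ρ1 - ρ0) * (q ^ j * π) * (1 - β * q) := by
        rw [pow_succ]; ring
      have h1 := key_lb lam
      have h2 := (hid lam).trans hδdef.symm
      rw [hrew]
      linarith [h2, mul_nonneg (mul_nonneg hd.le (sub_nonneg.2 hqj)) (by linarith : (0:ℝ) ≤ 1 - β * q),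
        mul_nonneg (mul_nonneg hb0.le hb1'.le) (sub_nonneg.2 h1)]
    obtain ⟨M, hM⟩ : ∃ M : ℝ, M = |lam| + 2 * C0 := ⟨_, rfl⟩
    have hMnn : 0 ≤ M := by rw [hM]; positivity
    obtain ⟨Φ, hΦ⟩ : ∃ Φ : ℕ → ℝ, Φ = fun j => q ^ j * π * ρ0 + (1 - q ^ j * π) * ρ1
        + β * V 1 lam - lam - β * V (q ^ (j + 1) * π) lam := ⟨_, rfl⟩
    have hind : ∀ n : ℕ, ∀ j : ℕ, δ - β ^ n * (M + δ) ≤ Φ j := by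
      intro n
      induction n with
      | zero =>
        intro j
        have hV1 := abs_le.1 (hC0 1 ⟨zero_le_one, le_refl 1⟩)
        have hVj := abs_le.1 (hC0 (q ^ (j + 1) * π) (hqπmem (j + 1)))
        have hr0' : 0 ≤ q ^ j * π * ρ0 + (1 - q ^ j * π) * ρ1 := by
          have h01 := hqπmem j
          obtain ⟨ha, hb⟩ := h01
          nlinarith
        have habs := abs_le.1 (le_refl |lam|)
        have : -(|lam|) ≤ lam := neg_abs_le lam
        simp only [hΦ, pow_zero, one_mul]
        linarith [mul_le_mul_of_nonneg_left hVj.2 hb0.le,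
          mul_le_mul_of_nonneg_left hV1.1 hb0.le, hr0', neg_abs_le lam,
          mul_le_of_le_one_left hC0nn hb1.le, hδ.le, abs_nonneg lam]
      | succ n ih =>
        intro j
        have hBtj := hBt j
        have hps : β ^ (n + 1) = β * β ^ n := by ring
        by_cases hc : lam + β * V (q ^ (j + 2) * π) lam
            ≤ q ^ (j + 1) * π * ρ0 + (1 - q ^ (j + 1) * π) * ρ1 + β * V 1 lam
        · -- play at j+1
          have heq : V (q ^ (j + 1) * π) lam
              = q ^ (j + 1) * π * ρ0 + (1 - q ^ (j + 1) * π) * ρ1 + β * V 1 lam := by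
            rw [hwB (j + 1)]; exact max_eq_right hc
          have hΦeq : Φ j = (q ^ j * π * ρ0 + (1 - q ^ j * π) * ρ1)
              - β * (q ^ (j + 1) * π * ρ0 + (1 - q ^ (j + 1) * π) * ρ1)
              - lam + β * (1 - β) * V 1 lam := by
            simp only [hΦ]; rw [heq]; ring
          rw [hΦeq]
          linarith [mul_nonneg (pow_nonneg hb0.le (n + 1)) (add_nonneg hMnn hδ.le)]
        · push_neg at hc
          have heq : V (q ^ (j + 1) * π) lam = lam + β * V (q ^ (j + 2) * π) lam := by
            rw [hwB (j + 1)]; exact max_eq_left hc.le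
          have hΦeq : Φ j = ((q ^ j * π * ρ0 + (1 - q ^ j * π) * ρ1)
              - β * (q ^ (j + 1) * π * ρ0 + (1 - q ^ (j + 1) * π) * ρ1)
              - lam + β * (1 - β) * V 1 lam) + β * Φ (j + 1) := by
            simp only [hΦ]; rw [heq]; ring
          have hih := mul_le_mul_of_nonneg_left (ih (j + 1)) hb0.le
          rw [hΦeq, hps]
          linarith [mul_nonneg hb0.le hδ.le]
    obtain ⟨n, hn⟩ := exists_pow_lt_of_lt_one (div_pos hδ (by linarith : (0:ℝ) < M + δ)) hb1
    have hsmall : β ^ n * (M + δ) < δ := by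
      rw [← lt_div_iff₀ (by linarith : (0:ℝ) < M + δ)]
      exact hn
    have hpos : 0 < Φ 0 := lt_of_lt_of_le (by linarith) (hind n 0)
    have hΦ0 : Φ 0 ≤ 0 := by
      simp only [hΦ, pow_zero, zero_add, pow_one, one_mul]
      linarith
    linarith

  have hmemW0 : π * ρ0 + (1 - π) * ρ1 + β * V 1 W0 ≤ W0 + β * V (q * π) W0 := by
    obtain ⟨AW, hAW⟩ : ∃ x : ℝ,
        x = (W0 * (1 - β ^ K) / (1 - β) + β ^ K * cK) / (1 - β ^ (K + 1)) := ⟨_, rfl⟩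
    have hAWA : A W0 = AW := by rw [hA, hAW]
    have hidW : (1 - β) * ρ1 - (ρ1 - ρ0) * π * (1 - β * q) - W0 + β * (1 - β) * AW = 0 := by
      have h := hid W0
      rw [hAWA, sub_self, mul_zero, zero_div] at h
      exact h
    have hcdiff : ∀ j : ℕ, (q ^ j * ρ0 + (1 - q ^ j) * ρ1)
        - β * (q ^ (j + 1) * ρ0 + (1 - q ^ (j + 1)) * ρ1)
        = (1 - β) * ρ1 - (ρ1 - ρ0) * q ^ j * (1 - β * q) := by
      intro j; rw [pow_succ]; ring
    obtain ⟨E, hE⟩ : ∃ E : ℕ → ℝ, E = fun j => if K ≤ j then q ^ j * ρ0 + (1 - q ^ j) * ρ1 + β * AW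
        else W0 * (1 - β ^ (K - j)) / (1 - β) + β ^ (K - j) * (cK + β * AW) := ⟨_, rfl⟩
    have hEK : ∀ j, K ≤ j → E j = q ^ j * ρ0 + (1 - q ^ j) * ρ1 + β * AW := by
      intro j hj; rw [hE]; simp [hj]
    have hElt : ∀ j, j < K →
        E j = W0 * (1 - β ^ (K - j)) / (1 - β) + β ^ (K - j) * (cK + β * AW) := by
      intro j hj; rw [hE]; simp [Nat.not_le.2 hj]
    have hE0 : E 0 = AW := by
      rw [hElt 0 hK1, Nat.sub_zero, hAW]
      field_simp
      ring
    -- E step identity below the threshold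
    have hEstep : ∀ j, j < K → E j = W0 + β * E (j + 1) := by
      intro j hj
      by_cases h : j + 1 = K
      · have hEj1 : E (j + 1) = cK + β * AW := by
          rw [hEK (j + 1) h.ge, hcK, h]
        have hKj : K - j = 1 := by omega
        rw [hElt j hj, hKj, hEj1, pow_one]
        field_simp
      · have hlt2 : j + 1 < K := by omega
        have hm : K - j = (K - (j + 1)) + 1 := by omega
        rw [hElt j hj, hElt (j + 1) hlt2, hm]
        field_simp
        ring
    -- play dominance at beliefs below threshold: c_j + β E 0 ≤ E j
    have hdown : ∀ m : ℕ, m ≤ K →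
        q ^ (K - m) * ρ0 + (1 - q ^ (K - m)) * ρ1 + β * AW ≤ E (K - m) := by
      intro m
      induction m with
      | zero =>
        intro _
        rw [Nat.sub_zero, hEK K le_rfl]
      | succ m ih =>
        intro hm
        have hmK : m ≤ K := by omega
        have ihm := ih hmK
        have hjlt : K - (m + 1) < K := by omega
        have hj1 : K - (m + 1) + 1 = K - m := by omega
        have hstep := hEstep (K - (m + 1)) hjlt
        rw [hj1] at hstep
        have hmul := mul_le_mul_of_nonneg_left ihm hb0.le
        have hdiff := hcdiff (K - (m + 1))
        rw [hj1] at hdiff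
        have hπle : π ≤ q ^ (K - (m + 1)) := hKleast _ hjlt
        have hqq : (0:ℝ) ≤ 1 - β * q := by linarith
        have hqle : (ρ1 - ρ0) * (1 - β * q) * (q ^ (K - (m + 1)) - π) ≥ 0 := by
          apply mul_nonneg (mul_nonneg hd.le hqq); linarith
        rw [hstep]
        linarith [hidW, hdiff, hmul, hqle]
    have hplay : ∀ j : ℕ, q ^ j * ρ0 + (1 - q ^ j) * ρ1 + β * E 0 ≤ E j := by
      intro j
      rw [hE0]
      rcases lt_or_ge j K with hj | hj
      · have hm : j = K - (K - j) := by omega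
        have := hdown (K - j) (by omega)
        rw [← hm] at this
        exact this
      · rw [hEK j hj]
    have hwait : ∀ j : ℕ, W0 + β * E (j + 1) ≤ E j := by
      intro j
      rcases lt_or_ge j K with hj | hj
      · rw [hEstep j hj]
      · rw [hEK j hj, hEK (j + 1) (by omega)]
        have hdiff := hcdiff j
        have hqle : q ^ j ≤ q ^ K := pow_le_pow_of_le_one hq0.le hq1.le hj
        have hqq : (0:ℝ) ≤ 1 - β * q := by linarith
        linarith [hidW, hdiff,
          mul_nonneg (mul_nonneg hd.le hqq) (by linarith : (0:ℝ) ≤ π - q ^ j)]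
    -- lower bound on E
    obtain ⟨ME, hME⟩ : ∃ x : ℝ, x = |W0| / (1 - β) + 1 + |AW| := ⟨_, rfl⟩
    have hMEnn : 0 ≤ ME := by rw [hME]; positivity
    have hElb : ∀ j : ℕ, -ME ≤ E j := by
      intro j
      have hAWn := neg_abs_le AW
      have hbAW : β * |AW| ≤ |AW| := mul_le_of_le_one_left (abs_nonneg AW) hb1.le
      have hWd : 0 ≤ |W0| / (1 - β) := by positivity
      rcases lt_or_ge j K with hj | hj
      · rw [hElt j hj, hME]
        have hpn : (0:ℝ) ≤ β ^ (K - j) := pow_nonneg hb0.le _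
        have hp1 : β ^ (K - j) ≤ 1 := pow_le_one₀ hb0.le hb1.le
        have hcK0 : 0 ≤ cK := by
          obtain ⟨h1, h2⟩ := hqmem K
          rw [hcK]; nlinarith
        have hcK1 : cK ≤ 1 := by
          obtain ⟨h1, h2⟩ := hqmem K
          rw [hcK]; nlinarith
        have hW0n := neg_abs_le W0
        have hbb : β ^ (K - j) * β ≤ 1 := mul_le_one₀ hp1 hb0.le hb1.le
        have h1' : -|W0| ≤ W0 * (1 - β ^ (K - j)) := by
          have e1 : (0:ℝ) ≤ 1 - β ^ (K - j) := by linarith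
          have e2 : 1 - β ^ (K - j) ≤ 1 := by linarith
          linarith [mul_le_mul_of_nonneg_right (neg_abs_le W0) e1,
            mul_le_of_le_one_right (abs_nonneg W0) e2]
        have h1 : -(|W0| / (1 - β)) ≤ W0 * (1 - β ^ (K - j)) / (1 - β) := by
          rw [← neg_div]
          exact div_le_div_of_nonneg_right h1' hb1'.le
        have h2 : -(1 + |AW|) ≤ β ^ (K - j) * (cK + β * AW) := by
          linarith [mul_nonneg hpn hcK0,
            mul_le_mul_of_nonneg_left (neg_abs_le AW) (mul_nonneg hpn hb0.le),
            mul_le_of_le_one_left (abs_nonneg AW) hbb]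
        linarith
      · rw [hEK j hj, hME]
        obtain ⟨h1, h2⟩ := hqmem j
        linarith [mul_nonneg h1 hr0.le,
          mul_nonneg (by linarith : (0:ℝ) ≤ 1 - q ^ j) (by linarith : (0:ℝ) ≤ ρ1),
          mul_le_mul_of_nonneg_left hAWn hb0.le, hbAW, hWd, abs_nonneg AW]
    -- Bellman on the orbit of 1
    obtain ⟨C1, hC1⟩ := hVbd W0
    have hC1nn : 0 ≤ C1 := le_trans (abs_nonneg _) (hC1 1 ⟨zero_le_one, le_refl 1⟩)
    have haB : ∀ j : ℕ, V (q ^ j) W0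
        = max (W0 + β * V (q ^ (j + 1)) W0)
          (q ^ j * ρ0 + (1 - q ^ j) * ρ1 + β * V 1 W0) := by
      intro j
      have h := hVeq W0 (q ^ j) (hqmem j)
      rw [show q * q ^ j = q ^ (j + 1) by ring] at h
      exact h
    obtain ⟨X, hX⟩ : ∃ x : ℝ, x = C1 + ME := ⟨_, rfl⟩
    have hXnn : 0 ≤ X := by rw [hX]; linarith
    have hupper : ∀ n : ℕ, ∀ j : ℕ, V (q ^ j) W0 ≤ E j + β ^ n * X := by
      intro n
      induction n with
      | zero =>
        intro j
        have h1 := (abs_le.1 (hC1 (q ^ j) (hqmem j))).2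
        have h2 := hElb j
        rw [pow_zero, one_mul, hX]
        linarith
      | succ n ih =>
        intro j
        have ih0 := ih 0
        rw [pow_zero] at ih0
        have ihj := ih (j + 1)
        rw [haB j, show β ^ (n + 1) = β ^ n * β from pow_succ β n]
        apply max_le
        · have hm := mul_le_mul_of_nonneg_left ihj hb0.le
          have hw := hwait j
          linarith
        · have hm := mul_le_mul_of_nonneg_left ih0 hb0.le
          have hp := hplay j
          linarith
    have hfin : V 1 W0 ≤ AW := by
      by_contra h
      push_neg at h
      have hX1 : (0:ℝ) < X + 1 := by linarith
      obtain ⟨n, hn⟩ := exists_pow_lt_of_lt_one (div_pos (by linarith : (0:ℝ) < V 1 W0 - AW) hX1) hb1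
      have hsm : β ^ n * (X + 1) < V 1 W0 - AW := by
        rw [← lt_div_iff₀ hX1]; exact hn
      have hup := hupper n 0
      rw [pow_zero, hE0] at hup
      have : β ^ n * X ≤ β ^ n * (X + 1) :=
        mul_le_mul_of_nonneg_left (by linarith) (pow_nonneg hb0.le n)
      linarith
    -- conclude
    have hmem1 : q * π ∈ Set.Icc (0:ℝ) 1 := by
      have h := hqπmem 1
      rwa [pow_one] at h
    have hbell := hVeq W0 (q * π) hmem1
    have hge : q * π * ρ0 + (1 - q * π) * ρ1 + β * V 1 W0 ≤ V (q * π) W0 := by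
      rw [hbell]; exact le_max_right _ _
    have hkey : π * ρ0 + (1 - π) * ρ1 + β * V 1 W0
        ≤ W0 + β * (q * π * ρ0 + (1 - q * π) * ρ1 + β * V 1 W0) := by
      linarith [hidW, mul_le_mul_of_nonneg_left hfin (mul_nonneg hb0.le hb1'.le)]
    linarith [mul_le_mul_of_nonneg_left hge hb0.le, hkey]

  have hmemS : W0 ∈ {lam : ℝ |
      π * ρ0 + (1 - π) * ρ1 + β * V 1 lam ≤ lam + β * V (q * π) lam} := hmemW0
  have hbdd : BddBelow {lam : ℝ |
      π * ρ0 + (1 - π) * ρ1 + β * V 1 lam ≤ lam + β * V (q * π) lam} :=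
    ⟨W0, fun x hx => hlb x hx⟩
  exact le_antisymm (csInf_le hbdd hmemS) (le_csInf ⟨W0, hmemS⟩ fun b hb => hlb b hb)
end
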